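/- arXiv:q-alg/9512033 — 4 statements merged into one kernel-verified Lean document; each statement's English description precedes it below -/
import Mathlib

section
/- Let ω ∈ W_n^1 be a woven braid of type (n) and let κ ∈ P_n be a pure braid. Then κ⁻¹ ω κ ∈ W_n^1 if and only if κ ∈ K_n. In particular, conjugation by elements of K_n maps W_n^1 into itself. -/
/-! Basic setup: the braid group `B_n` as a presented group.  Generators are
indexed by `ℕ`; the generator with index `i` represents `σ_i` for
`1 ≤ i ≤ n-1`, and all generators with index `0` or `≥ n` are trivialized. -/

/-- The relators of the braid group `B_n`. -/
def braidRels (n : ℕ) : Set (FreeGroup ℕ) :=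
  { r | (∃ i, 1 ≤ i ∧ i + 2 ≤ n ∧
          r = .of i * .of (i+1) * .of i * (.of (i+1) * .of i * .of (i+1))⁻¹) ∨
        (∃ i j, 1 ≤ i ∧ i + 2 ≤ j ∧ j + 1 ≤ n ∧
          r = .of i * .of j * (.of j * .of i)⁻¹) ∨
        (∃ i, (i = 0 ∨ n ≤ i) ∧ r = .of i) }

/-- The braid group on `n` strings. -/
abbrev BraidGroup (n : ℕ) := PresentedGroup (braidRels n)

/-- The standard generator `σ_i` of `B_n` (nontrivial for `1 ≤ i ≤ n-1`). -/
def σ (n i : ℕ) : BraidGroup n := PresentedGroup.of i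

/-- The transposition `(i, i+1)` of the strings `{1, …, n}`, as a permutation of `ℕ`. -/
def permOfGen (n i : ℕ) : Equiv.Perm ℕ :=
  if 1 ≤ i ∧ i + 1 ≤ n then Equiv.swap i (i+1) else 1

theorem braidRels_lift (n : ℕ) :
    ∀ r ∈ braidRels n, FreeGroup.lift (permOfGen n) r = 1 := by
  rintro r (⟨i, h1, h2, rfl⟩ | ⟨i, j, h1, h2, h3, rfl⟩ | ⟨i, hi, rfl⟩)
  · have e1 : permOfGen n i = Equiv.swap i (i+1) := if_pos ⟨h1, by omega⟩
    have e2 : permOfGen n (i+1) = Equiv.swap (i+1) (i+2) := if_pos ⟨by omega, by omega⟩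
    simp only [map_mul, map_inv, FreeGroup.lift_apply_of, e1, e2]
    rw [mul_inv_eq_one]
    have l : Equiv.swap i (i+1) * Equiv.swap (i+1) (i+2) * Equiv.swap i (i+1)
        = Equiv.swap i (i+2) := by
      have h := Equiv.swap_mul_swap_mul_swap
        (x := i+2) (y := i+1) (z := i) (by omega) (by omega)
      rwa [Equiv.swap_comm (i+1) i, Equiv.swap_comm (i+2) (i+1)] at h
    have r : Equiv.swap (i+1) (i+2) * Equiv.swap i (i+1) * Equiv.swap (i+1) (i+2)
        = Equiv.swap i (i+2) := by
      have h := Equiv.swap_mul_swap_mul_swap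
        (x := i) (y := i+1) (z := i+2) (by omega) (by omega)
      rwa [Equiv.swap_comm (i+2) i] at h
    rw [l, r]
  · have e1 : permOfGen n i = Equiv.swap i (i+1) := if_pos ⟨h1, by omega⟩
    have e2 : permOfGen n j = Equiv.swap j (j+1) := if_pos ⟨by omega, by omega⟩
    simp only [map_mul, map_inv, FreeGroup.lift_apply_of, e1, e2]
    rw [mul_inv_eq_one]
    have hd : (Equiv.swap i (i+1)).Disjoint (Equiv.swap j (j+1)) := by
      intro x
      rcases eq_or_ne x i with rfl | hxi
      · right; exact Equiv.swap_apply_of_ne_of_ne (by omega) (by omega)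
      rcases eq_or_ne x (i+1) with rfl | hxi1
      · right; exact Equiv.swap_apply_of_ne_of_ne (by omega) (by omega)
      · left; exact Equiv.swap_apply_of_ne_of_ne hxi hxi1
    exact hd.commute
  · have h : permOfGen n i = 1 := if_neg (by omega)
    simp [h]

/-- The canonical projection `Π : B_n → S_n`, sending `σ_i` to the
transposition `(i, i+1)` (strings are `1, …, n`, permutations of `ℕ`
fixing everything else). -/
def braidPerm (n : ℕ) : BraidGroup n →* Equiv.Perm ℕ :=
  PresentedGroup.toGroup (braidRels_lift n)

theorem braidPerm_σ (n i : ℕ) : braidPerm n (σ n i) = permOfGen n i :=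
  PresentedGroup.toGroup.of (braidRels_lift n)

/-- The pure braid group `P_n = ker Π`. -/
def PureBraid (n : ℕ) : Subgroup (BraidGroup n) := (braidPerm n).ker

/-- The standard pure braid generator
`A_{ij} = σ_{j-1} ⋯ σ_{i+1} σ_i² σ_{i+1}⁻¹ ⋯ σ_{j-1}⁻¹`. -/
def A (n i : ℕ) : ℕ → BraidGroup n
  | 0 => 1
  | j+1 => if j ≤ i then σ n i ^ 2 else σ n j * A n i j * (σ n j)⁻¹

/-- The group `P_n^j` of pure `j`-braids, generated by `A_{ij}` for `1 ≤ i < j`. -/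
def P (n j : ℕ) : Subgroup (BraidGroup n) :=
  Subgroup.closure ((fun i => A n i j) '' Set.Ico 1 j)

/-- Partial sums `N_1 = n_1, N_2 = n_1+n_2, …, N_k = n_1+⋯+n_k` of a list. -/
def partialSums : List ℕ → List ℕ
  | [] => []
  | a :: l => a :: (partialSums l).map (a + ·)

/-- The permutation braid `π_{n₁…n_k}`: the product `σ_1 σ_2 ⋯ σ_{n-1}` with the
letters `σ_{N_1}, …, σ_{N_{k-1}}` omitted. -/
def piBraid (n : ℕ) (ns : List ℕ) : BraidGroup n :=
  (((List.range n).filter fun i => decide (1 ≤ i ∧ i ∉ partialSums ns)).map (σ n)).prod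

/-- The permutation braid `π_n = σ_1 σ_2 ⋯ σ_{n-1}`. -/
def piN (n : ℕ) : BraidGroup n := piBraid n [n]

/-- A braid is woven of type `(n₁, …, n_k)` if it can be written as
`π_{n₁…n_k} β_{N_1} β_{N_2} ⋯ β_{N_k}` with each `β_{N_i} ∈ P_n^{N_i}`. -/
def IsWovenOfType (n : ℕ) (ns : List ℕ) (w : BraidGroup n) : Prop :=
  ∃ b : ℕ → BraidGroup n,
    (∀ m ∈ partialSums ns, b m ∈ P n m) ∧
    w = piBraid n ns * ((partialSums ns).map b).prod

/-- `W_n^1 = π_n P_n^n`, the set of woven braids of type `(n)`. -/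
def W1 (n : ℕ) : Set (BraidGroup n) := { w | ∃ b ∈ P n n, w = piN n * b }
theorem σ_sq_mem (n i : ℕ) : σ n i ^ 2 ∈ PureBraid n := by
  have h : braidPerm n (σ n i) ^ 2 = 1 := by
    rw [braidPerm_σ]
    unfold permOfGen
    split_ifs
    · rw [sq]; exact Equiv.swap_mul_self _ _
    · simp
  simpa [PureBraid, MonoidHom.mem_ker, map_pow] using h

theorem A_mem_pure (n i j : ℕ) : A n i j ∈ PureBraid n := by
  induction j with
  | zero => exact one_mem _
  | succ j ih =>
    show A n i (j+1) ∈ _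
    rw [A]
    split_ifs
    · exact σ_sq_mem n i
    · simp only [PureBraid, MonoidHom.mem_ker, map_mul, map_inv] at ih ⊢
      simp [ih]

/-- The generator `A_{ij}` as an element of the pure braid group `P_n`. -/
def Agen (n i j : ℕ) : ↥(PureBraid n) := ⟨A n i j, A_mem_pure n i j⟩

/-- `f` is the homomorphism `∇ : P_n → P_n` of the paper, determined by
`∇(A_{1j}) = 1` and `∇(A_{ij}) = A_{i-1,j-1}` for `i ≥ 2`. -/
def IsNabla (n : ℕ) (f : ↥(PureBraid n) →* ↥(PureBraid n)) : Prop :=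
  (∀ j, 1 < j → j ≤ n → f (Agen n 1 j) = 1) ∧
  (∀ i j, 2 ≤ i → i < j → j ≤ n → f (Agen n i j) = Agen n (i-1) (j-1))

/-- Conjugation by `π_n` as a homomorphism `P_n → P_n`, `α ↦ π_n α π_n⁻¹`. -/
def conjPiHom (n : ℕ) : ↥(PureBraid n) →* ↥(PureBraid n) where
  toFun α := ⟨piN n * ↑α * (piN n)⁻¹,
    Subgroup.Normal.conj_mem (MonoidHom.normal_ker _) ↑α α.2 (piN n)⟩
  map_one' := by ext; simp
  map_mul' a b := by ext; push_cast; group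

/-- The product `β ∇(β) ∇²(β) ⋯ ∇^{m-1}(β)`. -/
def weave (n : ℕ) (f : ↥(PureBraid n) →* ↥(PureBraid n)) (m : ℕ)
    (β : ↥(PureBraid n)) : ↥(PureBraid n) :=
  ((List.range m).map fun t => (⇑f)^[t] β).prod

/-- The set `K_n = { β ∇(β) ∇²(β) ⋯ ∇^{n-2}(β) : β ∈ P_n^n }`. -/
def Kset (n : ℕ) (f : ↥(PureBraid n) →* ↥(PureBraid n)) : Set ↥(PureBraid n) :=
  { k | ∃ β : ↥(PureBraid n), (β : BraidGroup n) ∈ P n n ∧ k = weave n f (n-1) β }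
section Basic
variable {n : ℕ}

theorem rel_one {r : FreeGroup ℕ} (hr : r ∈ braidRels n) :
    (QuotientGroup.mk r : BraidGroup n) = 1 := by
  rw [QuotientGroup.eq_one_iff]
  exact Subgroup.subset_normalClosure hr

theorem sigma_triv {i : ℕ} (h : i = 0 ∨ n ≤ i) : σ n i = 1 :=
  rel_one (Or.inr (Or.inr ⟨i, h, rfl⟩))

theorem braid_rel {i : ℕ} (h1 : 1 ≤ i) (h2 : i + 2 ≤ n) :
    σ n i * σ n (i+1) * σ n i = σ n (i+1) * σ n i * σ n (i+1) := by
  have h := rel_one (n := n) (Or.inl ⟨i, h1, h2, rfl⟩)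
  have : ((QuotientGroup.mk (FreeGroup.of i * FreeGroup.of (i+1) * FreeGroup.of i *
      (FreeGroup.of (i+1) * FreeGroup.of i * FreeGroup.of (i+1))⁻¹) : BraidGroup n)) =
      σ n i * σ n (i+1) * σ n i * (σ n (i+1) * σ n i * σ n (i+1))⁻¹ := rfl
  rw [this] at h
  exact mul_inv_eq_one.mp h

theorem comm_rel {i j : ℕ} (h : i + 2 ≤ j) :
    σ n i * σ n j = σ n j * σ n i := by
  rcases Nat.eq_zero_or_pos i with rfl | hi
  · rw [sigma_triv (Or.inl rfl)]; group
  rcases le_or_gt n j with hj | hj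
  · rw [sigma_triv (Or.inr hj)]; group
  · have h := rel_one (n := n) (Or.inr (Or.inl ⟨i, j, hi, h, by omega, rfl⟩))
    have e : ((QuotientGroup.mk (FreeGroup.of i * FreeGroup.of j *
        (FreeGroup.of j * FreeGroup.of i)⁻¹) : BraidGroup n)) =
        σ n i * σ n j * (σ n j * σ n i)⁻¹ := rfl
    rw [e] at h
    exact mul_inv_eq_one.mp h

theorem comm_rel' {i j : ℕ} (h : i + 2 ≤ j) : Commute (σ n i) (σ n j) := comm_rel h

end Basic
section ALemmas
variable {n : ℕ}

theorem conj_swap {G : Type*} [Group G] {x y a : G} (h : x * y = y * x) :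
    x * (y * a * y⁻¹) * x⁻¹ = y * (x * a * x⁻¹) * y⁻¹ := by
  have h2 : y⁻¹ * x⁻¹ = x⁻¹ * y⁻¹ := by
    rw [← mul_inv_rev, ← mul_inv_rev, h]
  calc x * (y * a * y⁻¹) * x⁻¹ = (x * y) * a * (y⁻¹ * x⁻¹) := by group
    _ = (y * x) * a * (x⁻¹ * y⁻¹) := by rw [h, h2]
    _ = y * (x * a * x⁻¹) * y⁻¹ := by group

theorem A_succ_of_lt {i j : ℕ} (h : i < j) :
    A n i (j+1) = σ n j * A n i j * (σ n j)⁻¹ := by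
  rw [A, if_neg (by omega)]

theorem A_base (i : ℕ) : A n i (i+1) = σ n i ^ 2 := by
  rw [A, if_pos le_rfl]

/-- `σ_k` commutes with `A_{ij}` when `k + 2 ≤ i`. -/
theorem comm_A_low {k i : ℕ} (h : k + 2 ≤ i) (j : ℕ) :
    Commute (σ n k) (A n i j) := by
  induction j with
  | zero => exact Commute.one_right _
  | succ j ih =>
    rw [A]
    split_ifs
    · exact ((comm_rel' h).pow_right 2)
    · exact ((comm_rel' (by omega)).mul_right ih).mul_right
        ((comm_rel' (by omega)).inv_right)

/-- `σ_k` commutes with `A_{ij}` when `j + 1 ≤ k` (and `i < j`). -/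
theorem comm_A_high {k i j : ℕ} (hij : i < j) (h : j + 1 ≤ k) :
    Commute (σ n k) (A n i j) := by
  induction j with
  | zero => exact Commute.one_right _
  | succ j ih =>
    rw [A]
    split_ifs with hc
    · have : i = j := by omega
      subst this
      exact ((comm_rel' (show i + 2 ≤ k by omega)).symm.pow_right 2)
    · exact (((comm_rel' (show j + 2 ≤ k by omega)).symm.mul_right
        (ih (by omega) (by omega))).mul_right
        ((comm_rel' (show j + 2 ≤ k by omega)).symm.inv_right))

/-- `σ_i σ_{i+1} σ_i⁻¹ = σ_{i+1}⁻¹ σ_i σ_{i+1}` within range. -/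
theorem braid_conj {i : ℕ} (h1 : 1 ≤ i) (h2 : i + 2 ≤ n) :
    σ n i * σ n (i+1) * (σ n i)⁻¹ = (σ n (i+1))⁻¹ * σ n i * σ n (i+1) := by
  have hb := braid_rel (n := n) h1 h2
  calc σ n i * σ n (i+1) * (σ n i)⁻¹
      = (σ n (i+1))⁻¹ * (σ n (i+1) * σ n i * σ n (i+1)) * (σ n i)⁻¹ := by group
    _ = (σ n (i+1))⁻¹ * (σ n i * σ n (i+1) * σ n i) * (σ n i)⁻¹ := by rw [hb]
    _ = (σ n (i+1))⁻¹ * σ n i * σ n (i+1) := by group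

/-- `σ_k A_{ij} σ_k⁻¹ = A_{ij}` for `i + 1 ≤ k ≤ j - 2` (all within range). -/
theorem conj_A_mid {k i j : ℕ} (hi : 1 ≤ i) (hk : i + 1 ≤ k) (hkj : k + 2 ≤ j)
    (hjn : j ≤ n) : σ n k * A n i j * (σ n k)⁻¹ = A n i j := by
  induction j, hkj using Nat.le_induction with
  | base =>
    have e2 : A n i (k+2) = σ n (k+1) * A n i (k+1) * (σ n (k+1))⁻¹ :=
      A_succ_of_lt (by omega)
    have e1 : A n i (k+1) = σ n k * A n i k * (σ n k)⁻¹ := A_succ_of_lt (by omega)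
    have hcomm : Commute (σ n (k+1)) (A n i k) := by
      rcases Nat.lt_or_ge i k with h | h
      · exact comm_A_high h (by omega)
      · have : i = k := by omega
        subst this
        rcases Nat.exists_eq_add_of_le hi with ⟨m, rfl⟩
        rw [show 1 + m = m + 1 by omega, A, if_pos (by omega)]
        exact ((comm_rel' (by omega)).symm.pow_right 2)
    have hb : σ n k * σ n (k+1) * σ n k = σ n (k+1) * σ n k * σ n (k+1) :=
      braid_rel (by omega) (by omega)
    rw [e2, e1]
    calc σ n k * (σ n (k+1) * (σ n k * A n i k * (σ n k)⁻¹) * (σ n (k+1))⁻¹) * (σ n k)⁻¹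
        = (σ n k * σ n (k+1) * σ n k) * A n i k * (σ n k * σ n (k+1) * σ n k)⁻¹ := by
          group
      _ = (σ n (k+1) * σ n k * σ n (k+1)) * A n i k * (σ n (k+1) * σ n k * σ n (k+1))⁻¹ := by
          rw [hb]
      _ = σ n (k+1) * (σ n k * (σ n (k+1) * A n i k * (σ n (k+1))⁻¹) * (σ n k)⁻¹) * (σ n (k+1))⁻¹ := by
          group
      _ = σ n (k+1) * (σ n k * A n i k * (σ n k)⁻¹) * (σ n (k+1))⁻¹ := by
          have hA : σ n (k+1) * A n i k * (σ n (k+1))⁻¹ = A n i k := by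
            rw [hcomm.eq]; group
          rw [hA]
  | succ j hj ih =>
    rw [A_succ_of_lt (show i < j by omega),
        conj_swap (comm_rel' (show k + 2 ≤ j by omega)).eq, ih (by omega)]

/-- `σ_i A_{ij} σ_i⁻¹ = A_{i+1,j}` for `i + 2 ≤ j ≤ n`. -/
theorem conj_A_up {i j : ℕ} (hi : 1 ≤ i) (hij : i + 2 ≤ j) (hjn : j ≤ n) :
    σ n i * A n i j * (σ n i)⁻¹ = A n (i+1) j := by
  induction j, hij using Nat.le_induction with
  | base =>
    have hb : σ n i * σ n (i+1) * σ n i = σ n (i+1) * σ n i * σ n (i+1) :=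
      braid_rel (by omega) (by omega)
    have h1 := braid_conj (n := n) (i := i) (by omega) (by omega)
    rw [A_succ_of_lt (show i < i + 1 by omega), A_base, A_base]
    calc σ n i * (σ n (i+1) * σ n i ^ 2 * (σ n (i+1))⁻¹) * (σ n i)⁻¹
        = (σ n i * σ n (i+1) * σ n i) * (σ n i * σ n (i+1) * (σ n i)⁻¹)⁻¹ := by
          rw [sq]; group
      _ = (σ n (i+1) * σ n i * σ n (i+1)) * ((σ n (i+1))⁻¹ * σ n i * σ n (i+1))⁻¹ := by
          rw [hb, h1]
      _ = σ n (i+1) ^ 2 := by rw [sq]; group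
  | succ j hj ih =>
    rw [A_succ_of_lt (show i < j by omega),
      conj_swap (comm_rel' (show i + 2 ≤ j by omega)).eq, ih (by omega)]
    exact (A_succ_of_lt (show i + 1 < j by omega)).symm

/-- `σ_k A_{k+1,j} σ_k⁻¹ = A_{k+1,j}⁻¹ A_{k,j} A_{k+1,j}` for `k + 2 ≤ j ≤ n`. -/
theorem conj_A_down {k j : ℕ} (hk : 1 ≤ k) (hkj : k + 2 ≤ j) (hjn : j ≤ n) :
    σ n k * A n (k+1) j * (σ n k)⁻¹ = (A n (k+1) j)⁻¹ * A n k j * A n (k+1) j := by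
  induction j, hkj using Nat.le_induction with
  | base =>
    have h1 := braid_conj (n := n) (i := k) (by omega) (by omega)
    have e : A n k (k+2) = σ n (k+1) * A n k (k+1) * (σ n (k+1))⁻¹ :=
      A_succ_of_lt (by omega)
    rw [e, show A n (k+1) (k+2) = σ n (k+1) ^ 2 from A_base (k+1), A_base]
    have key : σ n k * σ n (k+1) ^ 2 * (σ n k)⁻¹ =
        (σ n (k+1))⁻¹ * σ n k ^ 2 * σ n (k+1) := by
      calc σ n k * σ n (k+1) ^ 2 * (σ n k)⁻¹
          = (σ n k * σ n (k+1) * (σ n k)⁻¹) * (σ n k * σ n (k+1) * (σ n k)⁻¹) := by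
            rw [sq]; group
        _ = ((σ n (k+1))⁻¹ * σ n k * σ n (k+1)) * ((σ n (k+1))⁻¹ * σ n k * σ n (k+1)) := by
            rw [h1]
        _ = (σ n (k+1))⁻¹ * σ n k ^ 2 * σ n (k+1) := by rw [sq]; group
    rw [key]
    group
  | succ j hj ih =>
    rw [A_succ_of_lt (show k + 1 < j by omega),
        conj_swap (comm_rel' (show k + 2 ≤ j by omega)).eq, ih (by omega),
        A_succ_of_lt (show k < j by omega)]
    group

end ALemmas
section PiLemmas
variable {n : ℕ}

/-- `Dw n j = σ_1 σ_2 ⋯ σ_j`. -/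
def Dw (n : ℕ) : ℕ → BraidGroup n
  | 0 => 1
  | j+1 => Dw n j * σ n (j+1)

theorem Dw_comm {k m : ℕ} (h : m + 2 ≤ k) : Commute (σ n k) (Dw n m) := by
  induction m with
  | zero => exact Commute.one_right _
  | succ m ih =>
    exact (ih (by omega)).mul_right ((comm_rel' (show m + 1 + 2 ≤ k by omega)).symm)

theorem piN_eq : piN n = Dw n (n-1) := by
  have key : ∀ m, m ≤ n →
      (((List.range m).filter fun i => decide (1 ≤ i ∧ i ∉ partialSums [n])).map
        (σ n)).prod = Dw n (m-1) := by
    intro m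
    induction m with
    | zero => intro _; simp [Dw]
    | succ m ih =>
      intro hm
      rw [List.range_succ, List.filter_append, List.map_append, List.prod_append,
        ih (by omega)]
      rcases Nat.eq_zero_or_pos m with rfl | hm'
      · simp [Dw, partialSums]
      · have hmem : m ∉ partialSums [n] := by
          simp [partialSums]; omega
        have : (List.filter (fun i => decide (1 ≤ i ∧ i ∉ partialSums [n])) [m]) = [m] := by
          simp [hmem]; omega
        rw [this]
        simp only [List.map_cons, List.map_nil, List.prod_cons, List.prod_nil, mul_one]
        have : m - 1 + 1 = m := by omega
        conv_rhs => rw [show m + 1 - 1 = m by omega, ← this, Dw]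
        rw [this]
    
  have := key n le_rfl
  simpa [piN, piBraid] using this

theorem Dw_sigma {i j : ℕ} (hi : 1 ≤ i) (hij : i + 1 ≤ j) (hj : j + 1 ≤ n) :
    Dw n j * σ n i = σ n (i+1) * Dw n j := by
  induction j, hij using Nat.le_induction with
  | base =>
    rcases Nat.exists_eq_add_of_le hi with ⟨m, rfl⟩
    rw [show 1 + m = m + 1 by omega] at *
    have hb : σ n (m+1) * σ n (m+2) * σ n (m+1) = σ n (m+2) * σ n (m+1) * σ n (m+2) :=
      braid_rel (by omega) (by omega)
    have hc : Commute (σ n (m+2)) (Dw n m) := Dw_comm (by omega)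
    show Dw n (m+2) * σ n (m+1) = σ n (m+2) * Dw n (m+2)
    calc Dw n (m+2) * σ n (m+1)
        = Dw n m * (σ n (m+1) * σ n (m+2) * σ n (m+1)) := by
          rw [Dw, Dw]; group
      _ = Dw n m * (σ n (m+2) * σ n (m+1) * σ n (m+2)) := by rw [hb]
      _ = (Dw n m * σ n (m+2)) * (σ n (m+1) * σ n (m+2)) := by group
      _ = (σ n (m+2) * Dw n m) * (σ n (m+1) * σ n (m+2)) := by rw [← hc.eq]
      _ = σ n (m+2) * Dw n (m+2) := by rw [Dw, Dw]; group
  | succ j hj ih =>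
    have hc : Commute (σ n i) (σ n (j+1)) := comm_rel' (by omega)
    calc Dw n (j+1) * σ n i = Dw n j * (σ n (j+1) * σ n i) := by rw [Dw]; group
      _ = Dw n j * (σ n i * σ n (j+1)) := by rw [← hc.eq]
      _ = (Dw n j * σ n i) * σ n (j+1) := by group
      _ = (σ n (i+1) * Dw n j) * σ n (j+1) := by rw [ih (by omega)]
      _ = σ n (i+1) * Dw n (j+1) := by rw [Dw]; group

theorem pi_sigma {i : ℕ} (hi : 1 ≤ i) (h : i + 2 ≤ n) :
    piN n * σ n i = σ n (i+1) * piN n := by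
  rw [piN_eq]
  exact Dw_sigma hi (by omega) (by omega)

theorem pi_conj_sigma {i : ℕ} (hi : 1 ≤ i) (h : i + 2 ≤ n) :
    piN n * σ n i * (piN n)⁻¹ = σ n (i+1) := by
  rw [pi_sigma hi h]; group

theorem pi_conj_A {i j : ℕ} (hi : 1 ≤ i) (hij : i + 1 ≤ j) (hj : j + 1 ≤ n) :
    piN n * A n i j * (piN n)⁻¹ = A n (i+1) (j+1) := by
  induction j, hij using Nat.le_induction with
  | base =>
    rw [A_base, show A n (i+1) (i+1+1) = σ n (i+1) ^ 2 from A_base (i+1), sq, sq]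
    have h := pi_conj_sigma hi (show i + 2 ≤ n by omega)
    calc piN n * (σ n i * σ n i) * (piN n)⁻¹
        = (piN n * σ n i * (piN n)⁻¹) * (piN n * σ n i * (piN n)⁻¹) := by group
      _ = σ n (i+1) * σ n (i+1) := by rw [h]
  | succ j hj ih =>
    rw [A_succ_of_lt (show i < j by omega),
        show A n (i+1) (j+1+1) = σ n (j+1) * A n (i+1) (j+1) * (σ n (j+1))⁻¹ from
          A_succ_of_lt (by omega), ← ih (by omega)]
    have h := pi_conj_sigma (show 1 ≤ j by omega) (show j + 2 ≤ n by omega)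
    calc piN n * (σ n j * A n i j * (σ n j)⁻¹) * (piN n)⁻¹
        = (piN n * σ n j * (piN n)⁻¹) * (piN n * A n i j * (piN n)⁻¹) *
            (piN n * σ n j * (piN n)⁻¹)⁻¹ := by group
      _ = σ n (j+1) * (piN n * A n i j * (piN n)⁻¹) * (σ n (j+1))⁻¹ := by rw [h]

end PiLemmas
section Normalize
variable {n : ℕ}

theorem A_mem_P {i j : ℕ} (hi : 1 ≤ i) (hij : i < j) : A n i j ∈ P n j :=
  Subgroup.subset_closure ⟨i, Set.mem_Ico.mpr ⟨hi, hij⟩, rfl⟩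

/-- Conjugation by a generic group element, as membership-preserving helper. -/
theorem conj_mem_of_gen {G : Type*} [Group G] (H : Subgroup G) (g : G) (S : Set G)
    (hgen : ∀ x ∈ S, g * x * g⁻¹ ∈ H) {x : G} (hx : x ∈ Subgroup.closure S) :
    g * x * g⁻¹ ∈ H := by
  induction hx using Subgroup.closure_induction with
  | mem x hxS => exact hgen x hxS
  | one => simpa using H.one_mem
  | mul x y hx hy px py =>
    have : g * (x * y) * g⁻¹ = (g * x * g⁻¹) * (g * y * g⁻¹) := by group
    rw [this]; exact H.mul_mem px py
  | inv x hx px =>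
    have : g * x⁻¹ * g⁻¹ = (g * x * g⁻¹)⁻¹ := by group
    rw [this]; exact H.inv_mem px

/-- Pushing `P n j` across `σ_j` from the left-inverse side lands in `P n (j+1)`. -/
theorem conj_P_step {j : ℕ} {x : BraidGroup n} (hx : x ∈ P n j) :
    (σ n j)⁻¹ * x * σ n j ∈ P n (j+1) := by
  have := conj_mem_of_gen (P n (j+1)) (σ n j)⁻¹ _ ?_ hx
  · simpa using this
  · rintro y ⟨i, hi, rfl⟩
    rw [Set.mem_Ico] at hi
    have hA : A n i (j+1) = σ n j * A n i j * (σ n j)⁻¹ := A_succ_of_lt hi.2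
    have : (σ n j)⁻¹ * A n i j * ((σ n j)⁻¹)⁻¹ =
        (A n j (j+1))⁻¹ * A n i (j+1) * A n j (j+1) := by
      rw [A_base, hA, sq]; group
    rw [this]
    exact Subgroup.mul_mem _ (Subgroup.mul_mem _
      (Subgroup.inv_mem _ (A_mem_P (by omega) (by omega)))
      (A_mem_P (by omega) (by omega))) (A_mem_P (by omega) (by omega))

theorem normalize_P_fwd {t j : ℕ} (ht : 1 ≤ t) (htj : t + 2 ≤ j) (hj : j ≤ n)
    {x : BraidGroup n} (hx : x ∈ P n j) : σ n t * x * (σ n t)⁻¹ ∈ P n j := by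
  refine conj_mem_of_gen (P n j) (σ n t) _ ?_ hx
  rintro y ⟨i, hi, rfl⟩
  rw [Set.mem_Ico] at hi
  obtain ⟨hi1, hij⟩ := hi
  rcases lt_trichotomy t i with h | rfl | h
  · rcases Nat.lt_or_ge (t+1) i with h2 | h2
    · rw [(comm_A_low (by omega) j).eq]
      have : A n i j * σ n t * (σ n t)⁻¹ = A n i j := by group
      rw [this]; exact A_mem_P hi1 hij
    · -- t + 1 = i
      have : i = t + 1 := by omega
      subst this
      rw [conj_A_down ht (by omega) hj]
      exact Subgroup.mul_mem _ (Subgroup.mul_mem _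
        (Subgroup.inv_mem _ (A_mem_P (by omega) (by omega)))
        (A_mem_P (by omega) (by omega))) (A_mem_P (by omega) (by omega))
  · rw [conj_A_up hi1 (by omega) hj]
    exact A_mem_P (by omega) (by omega)
  · -- i < t, so i + 1 ≤ t ≤ j - 2
    rw [conj_A_mid hi1 (by omega) (by omega) hj]
    exact A_mem_P hi1 hij

theorem normalize_P_bwd {t j : ℕ} (ht : 1 ≤ t) (htj : t + 2 ≤ j) (hj : j ≤ n)
    {x : BraidGroup n} (hx : x ∈ P n j) : (σ n t)⁻¹ * x * σ n t ∈ P n j := by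
  have := conj_mem_of_gen (P n j) (σ n t)⁻¹ _ ?_ hx
  · simpa using this
  · rintro y ⟨i, hi, rfl⟩
    rw [Set.mem_Ico] at hi
    obtain ⟨hi1, hij⟩ := hi
    rcases lt_trichotomy t i with h | rfl | h
    · rcases Nat.lt_or_ge (t+1) i with h2 | h2
      · rw [(comm_A_low (by omega) j).inv_left.eq]
        have : A n i j * (σ n t)⁻¹ * ((σ n t)⁻¹)⁻¹ = A n i j := by group
        rw [this]; exact A_mem_P hi1 hij
      · -- t + 1 = i : σ_t⁻¹ A_{t+1,j} σ_t = A_{t,j}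
        have hup := conj_A_up (n := n) (i := t) ht (by omega) hj
        have : i = t + 1 := by omega
        subst this
        have : (σ n t)⁻¹ * A n (t+1) j * ((σ n t)⁻¹)⁻¹ = A n t j := by
          rw [← hup]; group
        rw [this]
        exact A_mem_P ht (by omega)
    · -- t = i : σ_i⁻¹ A_{i,j} σ_i = A_{ij} A_{i+1,j} A_{ij}⁻¹
      have hdown := conj_A_down (n := n) (k := t) ht (by omega) hj
      have hup := conj_A_up (n := n) (i := t) hi1 (by omega) hj
      have key : (σ n t)⁻¹ * A n t j * ((σ n t)⁻¹)⁻¹ =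
          A n t j * A n (t+1) j * (A n t j)⁻¹ := by
        have e : A n t j = A n (t+1) j * (σ n t * A n (t+1) j * (σ n t)⁻¹) *
            (A n (t+1) j)⁻¹ := by rw [hdown]; group
        have e2 : (σ n t)⁻¹ * A n (t+1) j * σ n t = A n t j := by
          rw [← hup]; group
        calc (σ n t)⁻¹ * A n t j * ((σ n t)⁻¹)⁻¹
            = (σ n t)⁻¹ * (A n (t+1) j * (σ n t * A n (t+1) j * (σ n t)⁻¹) *
                (A n (t+1) j)⁻¹) * σ n t := by rw [← e]; group
          _ = ((σ n t)⁻¹ * A n (t+1) j * σ n t) * A n (t+1) j *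
                (((σ n t)⁻¹ * A n (t+1) j * σ n t))⁻¹ := by group
          _ = A n t j * A n (t+1) j * (A n t j)⁻¹ := by rw [e2]
      rw [key]
      exact Subgroup.mul_mem _ (Subgroup.mul_mem _
        (A_mem_P hi1 hij) (A_mem_P (by omega) (by omega)))
        (Subgroup.inv_mem _ (A_mem_P hi1 hij))
    · -- i < t
      have hmid := conj_A_mid (n := n) (k := t) hi1 (by omega) (by omega) hj
      have : (σ n t)⁻¹ * A n i j * ((σ n t)⁻¹)⁻¹ = A n i j := by
        conv_lhs => rw [← hmid]
        group
      rw [this]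
      exact A_mem_P hi1 hij

end Normalize
section EwLemmas
variable {n : ℕ}

/-- `Ew n j = (σ_1 ⋯ σ_{j+1})⁻¹ σ_1² (σ_1 ⋯ σ_{j+1})`. -/
def Ew (n : ℕ) : ℕ → BraidGroup n
  | 0 => σ n 1 ^ 2
  | j+1 => (σ n (j+2))⁻¹ * Ew n j * σ n (j+2)

theorem Ew_eq (j : ℕ) : (Dw n (j+1))⁻¹ * σ n 1 ^ 2 * Dw n (j+1) = Ew n j := by
  induction j with
  | zero => simp [Ew, Dw]; group
  | succ j ih =>
    show (Dw n (j+1) * σ n (j+2))⁻¹ * σ n 1 ^ 2 * (Dw n (j+1) * σ n (j+2)) =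
      (σ n (j+2))⁻¹ * Ew n j * σ n (j+2)
    rw [← ih]; group

theorem Ew_mem (j : ℕ) : Ew n j ∈ P n (j+2) := by
  induction j with
  | zero =>
    have e : Ew n 0 = A n 1 2 := by simp [Ew, (A_base 1)]
    rw [e]; exact A_mem_P le_rfl Nat.one_lt_two
  | succ j ih =>
    show (σ n (j+2))⁻¹ * Ew n j * σ n (j+2) ∈ P n (j+3)
    exact conj_P_step ih

theorem pi_inv_A1 {j : ℕ} (hj2 : 2 ≤ j) (hjn : j ≤ n) :
    (piN n)⁻¹ * A n 1 j * piN n ∈ P n n := by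
  induction j, hj2 using Nat.le_induction with
  | base =>
    have e : A n 1 2 = σ n 1 ^ 2 := A_base 1
    have h2 : 2 ≤ n := hjn
    rw [e, piN_eq, show n - 1 = (n-2) + 1 by omega, Ew_eq]
    have := Ew_mem (n := n) (n-2)
    rwa [show n - 2 + 2 = n by omega] at this
  | succ j hj ih =>
    rcases Nat.exists_eq_add_of_le hj with ⟨m, rfl⟩
    set k := 2 + m with hk
    have e : A n 1 (k+1) = σ n k * A n 1 k * (σ n k)⁻¹ := A_succ_of_lt (by omega)
    have hps : piN n * σ n (k-1) = σ n k * piN n := by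
      have := pi_sigma (n := n) (i := k - 1) (by omega) (by omega)
      rwa [show k - 1 + 1 = k by omega] at this
    have hσ : (piN n)⁻¹ * σ n k * piN n = σ n (k-1) := by
      calc (piN n)⁻¹ * σ n k * piN n = (piN n)⁻¹ * (σ n k * piN n) := by group
        _ = (piN n)⁻¹ * (piN n * σ n (k-1)) := by rw [← hps]
        _ = σ n (k-1) := by group
    have key : (piN n)⁻¹ * A n 1 (k+1) * piN n =
        σ n (k-1) * ((piN n)⁻¹ * A n 1 k * piN n) * (σ n (k-1))⁻¹ := by
      rw [e, ← hσ]; group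
    rw [key]
    exact normalize_P_fwd (by omega) (by omega) le_rfl (ih (by omega))

end EwLemmas
section Combing
variable {n : ℕ}

/-- `rho n j r = σ_{j-1} σ_{j-2} ⋯ σ_{j-r}`. -/
def rho (n j : ℕ) : ℕ → BraidGroup n
  | 0 => 1
  | r+1 => rho n j r * σ n (j - (r+1))

theorem rho_shift (j r : ℕ) : rho n (j+1) (r+1) = σ n j * rho n j r := by
  induction r with
  | zero => show rho n (j+1) 0 * σ n (j+1-1) = σ n j * rho n j 0
            simp [rho]
  | succ r ih =>
    show rho n (j+1) (r+1) * σ n (j+1-(r+2)) = σ n j * (rho n j r * σ n (j-(r+1)))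
    rw [ih, show j+1-(r+2) = j - (r+1) by omega]
    group

theorem A_rho {i : ℕ} (hi : 1 ≤ i) (r : ℕ) :
    A n i (i+r+1) = rho n (i+r+1) r * σ n i ^ 2 * (rho n (i+r+1) r)⁻¹ := by
  induction r with
  | zero => simp [rho, A_base]
  | succ r ih =>
    have e : A n i (i+r+1+1) = σ n (i+r+1) * A n i (i+r+1) * (σ n (i+r+1))⁻¹ :=
      A_succ_of_lt (by omega)
    have hr : rho n (i+r+1+1) (r+1) = σ n (i+r+1) * rho n (i+r+1) r := rho_shift _ _
    rw [show i+(r+1)+1 = i+r+1+1 by omega, e, ih, hr]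
    group

theorem rho_comm {k j r : ℕ} (h : k + 2 ≤ j - r) : Commute (σ n k) (rho n j r) := by
  induction r with
  | zero => exact Commute.one_right _
  | succ r ih =>
    show Commute (σ n k) (rho n j r * σ n (j - (r+1)))
    exact (ih (by omega)).mul_right
      ((comm_rel' (show k + 2 ≤ j - (r+1) by omega)).symm.symm)

theorem rho_sigma_high {j k r : ℕ} (hk2 : 2 ≤ k) (hkj : k + 1 ≤ j) (hjn : j ≤ n)
    (hr : j - k + 1 ≤ r) (hrj : r + 1 ≤ j) :
    rho n j r * σ n k = σ n (k-1) * rho n j r := by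
  induction r, hr using Nat.le_induction with
  | base =>
    obtain ⟨s, rfl⟩ : ∃ s, j = k + s + 1 := ⟨j - k - 1, by omega⟩
    rw [show k + s + 1 - k + 1 = s + 2 by omega]
    have e2 : rho n (k+s+1) (s+2) = rho n (k+s+1) (s+1) * σ n (k-1) := by
      show rho n (k+s+1) (s+1) * σ n (k+s+1-(s+2)) = _
      rw [show k+s+1-(s+2) = k-1 by omega]
    have e1 : rho n (k+s+1) (s+1) = rho n (k+s+1) s * σ n k := by
      show rho n (k+s+1) s * σ n (k+s+1-(s+1)) = _
      rw [show k+s+1-(s+1) = k by omega]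
    have hb : σ n (k-1) * σ n k * σ n (k-1) = σ n k * σ n (k-1) * σ n k := by
      have := braid_rel (n := n) (i := k-1) (by omega) (by omega)
      rwa [show k - 1 + 1 = k by omega] at this
    have hc : Commute (σ n (k-1)) (rho n (k+s+1) s) :=
      rho_comm (by omega)
    calc rho n (k+s+1) (s+2) * σ n k
        = rho n (k+s+1) s * (σ n k * σ n (k-1) * σ n k) := by rw [e2, e1]; group
      _ = rho n (k+s+1) s * (σ n (k-1) * σ n k * σ n (k-1)) := by rw [← hb]
      _ = rho n (k+s+1) s * σ n (k-1) * (σ n k * σ n (k-1)) := by group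
      _ = σ n (k-1) * rho n (k+s+1) s * (σ n k * σ n (k-1)) := by rw [← hc.eq]
      _ = σ n (k-1) * rho n (k+s+1) (s+2) := by rw [e2, e1]; group
  | succ r hr ih =>
    have e : rho n j (r+1) = rho n j r * σ n (j-(r+1)) := rfl
    have hc : Commute (σ n (j-(r+1))) (σ n k) := comm_rel' (by omega)
    calc rho n j (r+1) * σ n k
        = rho n j r * (σ n (j-(r+1)) * σ n k) := by rw [e]; group
      _ = rho n j r * (σ n k * σ n (j-(r+1))) := by rw [hc.eq]
      _ = (rho n j r * σ n k) * σ n (j-(r+1)) := by group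
      _ = σ n (k-1) * rho n j (r+1) := by rw [ih (by omega), e]; group

theorem sigma_fix {t p : ℕ} (h1 : p ≠ t) (h2 : p ≠ t+1) :
    braidPerm n (σ n t) p = p := by
  rw [braidPerm_σ]
  unfold permOfGen
  split_ifs
  · exact Equiv.swap_apply_of_ne_of_ne h1 h2
  · rfl

/-- The subgroup generated by `σ_1, …, σ_{m-1}`. -/
def Gsub (n m : ℕ) : Subgroup (BraidGroup n) :=
  Subgroup.closure (σ n '' Set.Ico 1 m)

theorem Gsub_fix {m : ℕ} {g : BraidGroup n} (hg : g ∈ Gsub n m) :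
    ∀ p, m + 1 ≤ p → braidPerm n g p = p := by
  induction hg using Subgroup.closure_induction with
  | mem x hx =>
    obtain ⟨t, ht, rfl⟩ := hx
    rw [Set.mem_Ico] at ht
    intro p hp
    exact sigma_fix (by omega) (by omega)
  | one => intro p _; simp
  | mul x y hx hy px py =>
    intro p hp
    rw [map_mul, Equiv.Perm.mul_apply, py p hp, px p hp]
  | inv x hx px =>
    intro p hp
    rw [map_inv]
    rw [Equiv.Perm.inv_def, Equiv.symm_apply_eq]
    exact (px p hp).symm

theorem P_pure (j : ℕ) : P n j ≤ PureBraid n := by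
  rw [P, Subgroup.closure_le]
  rintro x ⟨i, _, rfl⟩
  exact A_mem_pure n i j

theorem rho_perm {j r : ℕ} (hr : 1 ≤ r) (hrj : r ≤ j - 1) (hjn : j ≤ n) :
    braidPerm n (rho n j r) j = j - 1 := by
  induction r, hr using Nat.le_induction with
  | base =>
    show braidPerm n (rho n j 0 * σ n (j-1)) j = j - 1
    have hcond : 1 ≤ j - 1 ∧ (j-1) + 1 ≤ n := by omega
    rw [show rho n j 0 = 1 from rfl, one_mul, braidPerm_σ]
    unfold permOfGen
    rw [if_pos hcond, show (j-1)+1 = j by omega]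
    exact Equiv.swap_apply_right _ _
  | succ r hr ih =>
    show braidPerm n (rho n j r * σ n (j-(r+1))) j = j - 1
    rw [map_mul, Equiv.Perm.mul_apply,
      sigma_fix (by omega) (by omega), ih (by omega)]

end Combing
section Generation
variable {n : ℕ}

theorem comb {j : ℕ} (hjn : j ≤ n) {g : BraidGroup n} (hg : g ∈ Gsub n j) :
    ∃ b ∈ Gsub n (j-1), ∃ m ∈ P n j, ∃ r, r ≤ j - 1 ∧ g = b * m * rho n j r := by
  have hg' : g ∈ Submonoid.closure ((σ n '' Set.Ico 1 j) ∪ (σ n '' Set.Ico 1 j)⁻¹) := by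
    rw [← Subgroup.closure_toSubmonoid]
    exact hg
  obtain ⟨l, hl, rfl⟩ := Submonoid.exists_list_of_mem_closure hg'
  clear hg hg'
  induction l using List.reverseRecOn with
  | nil =>
    exact ⟨1, Subgroup.one_mem _, 1, Subgroup.one_mem _, 0, by omega, by simp [rho]⟩
  | append_singleton l x ih =>
    obtain ⟨b, hb, m, hm, r, hr, he⟩ := ih (fun y hy => hl y (by simp [hy]))
    have hx := hl x (by simp)
    rw [List.prod_append, List.prod_singleton, he]
    clear hl he ih
    rcases hx with ⟨k, hk, rfl⟩ | hxinv
    · -- x = σ k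
      rw [Set.mem_Ico] at hk
      obtain ⟨hk1, hkj⟩ := hk
      have hj2 : 2 ≤ j := by omega
      by_cases h1 : k + 2 ≤ j - r
      · -- commute through rho
        refine ⟨b * σ n k, ?_, (σ n k)⁻¹ * m * σ n k, ?_, r, hr, ?_⟩
        · exact Subgroup.mul_mem _ hb
            (Subgroup.subset_closure ⟨k, Set.mem_Ico.mpr ⟨hk1, by omega⟩, rfl⟩)
        · exact normalize_P_bwd hk1 (by omega) hjn hm
        · have hc := (rho_comm (n := n) (j := j) h1).eq
          calc b * m * rho n j r * σ n k = b * m * (rho n j r * σ n k) := by group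
            _ = b * m * (σ n k * rho n j r) := by rw [← hc]
            _ = b * σ n k * ((σ n k)⁻¹ * m * σ n k) * rho n j r := by group
      by_cases h2 : k + 1 = j - r
      · refine ⟨b, hb, m, hm, r+1, by omega, ?_⟩
        have : rho n j (r+1) = rho n j r * σ n (j-(r+1)) := rfl
        rw [this, show j - (r+1) = k by omega]
        group
      by_cases h3 : k = j - r
      · have hr1 : 1 ≤ r := by omega
        obtain ⟨r', rfl⟩ : ∃ r', r = r' + 1 := ⟨r - 1, by omega⟩
        have e : rho n j (r'+1) = rho n j r' * σ n k := by
          show rho n j r' * σ n (j - (r'+1)) = _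
          rw [show j - (r'+1) = k by omega]
        have hA : A n k j = rho n j r' * σ n k ^ 2 * (rho n j r')⁻¹ := by
          have := A_rho (n := n) hk1 r'
          rwa [show k + r' + 1 = j by omega] at this
        refine ⟨b, hb, m * A n k j, Subgroup.mul_mem _ hm (A_mem_P hk1 (by omega)),
          r', by omega, ?_⟩
        rw [e, hA, sq]
        group
      · have h4 : j - r + 1 ≤ k := by omega
        refine ⟨b * σ n (k-1), ?_, (σ n (k-1))⁻¹ * m * σ n (k-1), ?_, r, hr, ?_⟩
        · exact Subgroup.mul_mem _ hb
            (Subgroup.subset_closure ⟨k-1, Set.mem_Ico.mpr ⟨by omega, by omega⟩, rfl⟩)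
        · exact normalize_P_bwd (by omega) (by omega) hjn hm
        · rw [mul_assoc (b * m), rho_sigma_high (by omega) (by omega) hjn (by omega)
            (by omega)]
          group
    · -- x = (σ k)⁻¹
      rw [Set.mem_inv] at hxinv
      obtain ⟨k, hk, hxk⟩ := hxinv
      have hxe : x = (σ n k)⁻¹ := by rw [hxk]; exact (inv_inv x).symm
      subst hxe
      rw [Set.mem_Ico] at hk
      obtain ⟨hk1, hkj⟩ := hk
      by_cases h1 : k + 2 ≤ j - r
      · refine ⟨b * (σ n k)⁻¹, ?_, σ n k * m * (σ n k)⁻¹, ?_, r, hr, ?_⟩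
        · exact Subgroup.mul_mem _ hb (Subgroup.inv_mem _
            (Subgroup.subset_closure ⟨k, Set.mem_Ico.mpr ⟨hk1, by omega⟩, rfl⟩))
        · exact normalize_P_fwd hk1 (by omega) hjn hm
        · have hc := (rho_comm (n := n) (j := j) h1).inv_left.eq
          calc b * m * rho n j r * (σ n k)⁻¹ = b * m * (rho n j r * (σ n k)⁻¹) := by group
            _ = b * m * ((σ n k)⁻¹ * rho n j r) := by rw [← hc]
            _ = b * (σ n k)⁻¹ * (σ n k * m * (σ n k)⁻¹) * rho n j r := by group
      by_cases h2 : k + 1 = j - r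
      · have e : rho n j (r+1) = rho n j r * σ n k := by
          show rho n j r * σ n (j - (r+1)) = _
          rw [show j - (r+1) = k by omega]
        have hA : A n k j = rho n j r * σ n k ^ 2 * (rho n j r)⁻¹ := by
          have := A_rho (n := n) hk1 r
          rwa [show k + r + 1 = j by omega] at this
        refine ⟨b, hb, m * (A n k j)⁻¹,
          Subgroup.mul_mem _ hm (Subgroup.inv_mem _ (A_mem_P hk1 (by omega))),
          r+1, by omega, ?_⟩
        rw [e, hA, sq]
        group
      by_cases h3 : k = j - r
      · obtain ⟨r', rfl⟩ : ∃ r', r = r' + 1 := ⟨r - 1, by omega⟩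
        have e : rho n j (r'+1) = rho n j r' * σ n k := by
          show rho n j r' * σ n (j - (r'+1)) = _
          rw [show j - (r'+1) = k by omega]
        refine ⟨b, hb, m, hm, r', by omega, ?_⟩
        rw [e]
        group
      · have h4 : j - r + 1 ≤ k := by omega
        refine ⟨b * (σ n (k-1))⁻¹, ?_, σ n (k-1) * m * (σ n (k-1))⁻¹, ?_, r, hr, ?_⟩
        · exact Subgroup.mul_mem _ hb (Subgroup.inv_mem _
            (Subgroup.subset_closure ⟨k-1, Set.mem_Ico.mpr ⟨by omega, by omega⟩, rfl⟩))
        · exact normalize_P_fwd (by omega) (by omega) hjn hm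
        · have hs := rho_sigma_high (n := n) (j := j) (k := k) (r := r) (by omega)
            (by omega) hjn (by omega) (by omega)
          have : rho n j r * (σ n k)⁻¹ = (σ n (k-1))⁻¹ * rho n j r := by
            calc rho n j r * (σ n k)⁻¹
                = (σ n (k-1))⁻¹ * (σ n (k-1) * rho n j r) * (σ n k)⁻¹ := by group
              _ = (σ n (k-1))⁻¹ * (rho n j r * σ n k) * (σ n k)⁻¹ := by rw [← hs]
              _ = (σ n (k-1))⁻¹ * rho n j r := by group
        
          rw [mul_assoc (b * m), this]
          group

/-- The subgroup generated by all the `A_{ij}`, `1 ≤ i < j ≤ n`. -/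
def Mfull (n : ℕ) : Subgroup (BraidGroup n) :=
  Subgroup.closure {x : BraidGroup n | ∃ i j, 1 ≤ i ∧ i < j ∧ j ≤ n ∧ x = A n i j}

theorem P_le_Mfull {j : ℕ} (hj : j ≤ n) : P n j ≤ Mfull n := by
  rw [P, Subgroup.closure_le]
  rintro x ⟨i, hi, rfl⟩
  rw [Set.mem_Ico] at hi
  exact Subgroup.subset_closure ⟨i, j, hi.1, hi.2, hj, rfl⟩

theorem gen_aux : ∀ j, j ≤ n → ∀ g ∈ Gsub n j, g ∈ PureBraid n → g ∈ Mfull n := by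
  intro j
  induction j with
  | zero =>
    intro _ g hg _
    have : Gsub n 0 = ⊥ := by
      rw [Gsub, show Set.Ico 1 0 = (∅ : Set ℕ) by simp, Set.image_empty,
        Subgroup.closure_empty]
    rw [this, Subgroup.mem_bot] at hg
    rw [hg]; exact Subgroup.one_mem _
  | succ j ih =>
    intro hjn g hg hgp
    obtain ⟨b, hb, m, hm, r, hr, rfl⟩ := comb hjn hg
    rw [show j + 1 - 1 = j from rfl] at hb hr
    have hgperm : braidPerm n (b * m * rho n (j+1) r) = 1 := hgp
    have hmperm : braidPerm n m = 1 := P_pure (j+1) hm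
    have hr0 : r = 0 := by
      by_contra hrne
      have hr1 : 1 ≤ r := by omega
      have h1 : braidPerm n (b * m * rho n (j+1) r) (j+1) = j+1 := by
        rw [hgperm]; rfl
      rw [map_mul, map_mul, Equiv.Perm.mul_apply, Equiv.Perm.mul_apply,
        rho_perm (n := n) (j := j+1) hr1 (by omega) hjn, show j + 1 - 1 = j from rfl, hmperm, Equiv.Perm.one_apply] at h1
      have h2 : braidPerm n b (j+1) = j + 1 := Gsub_fix hb (j+1) (by omega)
      have := (braidPerm n b).injective (h1.trans h2.symm)
      omega
    subst hr0
    have he : b * m * rho n (j+1) 0 = b * m := by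
      rw [show rho n (j+1) 0 = 1 from rfl, mul_one]
    rw [he] at hgperm ⊢
    have hbperm : braidPerm n b = 1 := by
      rw [map_mul, hmperm, mul_one] at hgperm
      exact hgperm
    exact Subgroup.mul_mem _ (ih (by omega) b hb hbperm) (P_le_Mfull hjn hm)

theorem Gsub_top : Gsub n n = ⊤ := by
  rw [eq_top_iff, ← PresentedGroup.closure_range_of (braidRels n), Subgroup.closure_le]
  rintro x ⟨i, rfl⟩
  by_cases h : 1 ≤ i ∧ i < n
  · exact Subgroup.subset_closure ⟨i, Set.mem_Ico.mpr h, rfl⟩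
  · have : σ n i = 1 := sigma_triv (by omega)
    rw [show (PresentedGroup.of i : BraidGroup n) = σ n i from rfl, this]
    exact Subgroup.one_mem _

theorem pure_le_Mfull : PureBraid n ≤ Mfull n := by
  intro g hg
  exact gen_aux n le_rfl g (by rw [Gsub_top]; trivial) hg

end Generation
section Nabla
variable {n : ℕ}

theorem Mfull_le_pure : Mfull n ≤ PureBraid n := by
  rw [Mfull, Subgroup.closure_le]
  rintro x ⟨i, j, _, _, _, rfl⟩
  exact A_mem_pure n i j

theorem sigma_mem_normalizer {t : ℕ} (ht : 1 ≤ t) (htn : t + 2 ≤ n) :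
    σ n t ∈ Subgroup.normalizer (P n n : Set (BraidGroup n)) := by
  rw [Subgroup.mem_normalizer_iff]
  intro h
  constructor
  · intro hh; exact normalize_P_fwd ht htn le_rfl hh
  · intro hh
    have := normalize_P_bwd ht htn le_rfl hh
    have e : (σ n t)⁻¹ * (σ n t * h * (σ n t)⁻¹) * σ n t = h := by group
    rwa [e] at this

theorem Gsub_mono {m m' : ℕ} (h : m ≤ m') : Gsub n m ≤ Gsub n m' :=
  Subgroup.closure_mono (Set.image_mono (Set.Ico_subset_Ico le_rfl h))

theorem A_mem_Gsub {i j : ℕ} (hi : 1 ≤ i) (hij : i < j) : A n i j ∈ Gsub n j := by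
  induction j with
  | zero => omega
  | succ j ih =>
    rcases Nat.lt_or_ge i j with h | h
    · rw [A_succ_of_lt h]
      have hσ : σ n j ∈ Gsub n (j+1) :=
        Subgroup.subset_closure ⟨j, Set.mem_Ico.mpr ⟨by omega, by omega⟩, rfl⟩
      exact Subgroup.mul_mem _ (Subgroup.mul_mem _ hσ (Gsub_mono (by omega) (ih h)))
        (Subgroup.inv_mem _ hσ)
    · have : i = j := by omega
      subst this
      rw [A_base]
      have hσ : σ n i ∈ Gsub n (i+1) :=
        Subgroup.subset_closure ⟨i, Set.mem_Ico.mpr ⟨hi, by omega⟩, rfl⟩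
      exact Subgroup.pow_mem _ hσ 2

theorem Mfull_normalizes : Mfull n ≤ Subgroup.normalizer (P n n : Set (BraidGroup n)) := by
  rw [Mfull, Subgroup.closure_le]
  rintro x ⟨i, j, hi, hij, hjn, rfl⟩
  rcases Nat.lt_or_ge j n with hj | hj
  · -- j ≤ n - 1 : A i j is a word in σ_1, …, σ_{n-2}
    have h1 : A n i j ∈ Gsub n j := A_mem_Gsub hi hij
    have h2 : Gsub n j ≤ Subgroup.normalizer (P n n : Set (BraidGroup n)) := by
      rw [Gsub, Subgroup.closure_le]
      rintro y ⟨t, htm, rfl⟩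
      rw [Set.mem_Ico] at htm
      exact sigma_mem_normalizer htm.1 (by omega)
    exact h2 h1
  · have : j = n := by omega
    subst this
    exact Subgroup.le_normalizer (A_mem_P hi hij)

theorem conj_N_mem {g x : BraidGroup n} (hg : g ∈ PureBraid n) (hx : x ∈ P n n) :
    g * x * g⁻¹ ∈ P n n :=
  ((Subgroup.mem_normalizer_iff.mp (Mfull_normalizes (pure_le_Mfull hg))) x).mp hx

end Nabla

section Assembly
variable {n : ℕ} (nabla : ↥(PureBraid n) →* ↥(PureBraid n))

theorem d_mem (hn : 2 ≤ n) (hnabla : IsNabla n nabla) (α : ↥(PureBraid n)) :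
    (↑(nabla α))⁻¹ * ((piN n)⁻¹ * ↑α * piN n) ∈ P n n := by
  have hα : (α : BraidGroup n) ∈ Mfull n := pure_le_Mfull α.2
  have key : ∀ (x : BraidGroup n), x ∈ Mfull n → ∀ hp : x ∈ PureBraid n,
      ((nabla ⟨x, hp⟩ : ↥(PureBraid n)) : BraidGroup n)⁻¹ *
        ((piN n)⁻¹ * x * piN n) ∈ P n n := by
    intro x hx
    induction hx using Subgroup.closure_induction with
    | mem x hxgen =>
      obtain ⟨i, j, hi, hij, hjn, rfl⟩ := hxgen
      intro hp
      rcases Nat.lt_or_ge i 2 with hi2 | hi2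
      · have : i = 1 := by omega
        subst this
        have e0 : (⟨A n 1 j, hp⟩ : ↥(PureBraid n)) = Agen n 1 j := Subtype.ext rfl
        rw [e0, hnabla.1 j (by omega) hjn]
        simpa using pi_inv_A1 (by omega) hjn
      · have e0 : (⟨A n i j, hp⟩ : ↥(PureBraid n)) = Agen n i j := Subtype.ext rfl
        rw [e0, hnabla.2 i j hi2 hij hjn]
        have hc : piN n * A n (i-1) (j-1) * (piN n)⁻¹ = A n i j := by
          have := pi_conj_A (n := n) (i := i-1) (j := j-1) (by omega) (by omega)
            (by omega)
          rwa [show i - 1 + 1 = i by omega, show j - 1 + 1 = j by omega] at this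
        have e1 : (piN n)⁻¹ * A n i j * piN n = A n (i-1) (j-1) := by
          calc (piN n)⁻¹ * A n i j * piN n
              = (piN n)⁻¹ * (piN n * A n (i-1) (j-1) * (piN n)⁻¹) * piN n := by rw [hc]
            _ = A n (i-1) (j-1) := by group
        have e2 : (↑(Agen n (i-1) (j-1)) : BraidGroup n) = A n (i-1) (j-1) := rfl
        rw [e2]
        have : (A n (i-1) (j-1))⁻¹ * ((piN n)⁻¹ * A n i j * piN n) = 1 := by
          rw [show (piN n)⁻¹ * A n i j * piN n = (piN n)⁻¹ * A n i j * piN n from rfl]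
          rw [show (piN n)⁻¹ * A n i j * piN n = A n (i-1) (j-1) from e1]
          group
        rw [show (piN n)⁻¹ * A n i j * piN n = A n (i-1) (j-1) from e1]
        simpa using Subgroup.one_mem _
    | one =>
      intro hp
      have e0 : (⟨(1 : BraidGroup n), hp⟩ : ↥(PureBraid n)) = 1 := Subtype.ext rfl
      rw [e0, map_one]
      simpa using Subgroup.one_mem _
    | mul x y hx hy px py =>
      intro hp
      have hxp : x ∈ PureBraid n := Mfull_le_pure hx
      have hyp : y ∈ PureBraid n := Mfull_le_pure hy
      have e0 : (⟨x * y, hp⟩ : ↥(PureBraid n)) = ⟨x, hxp⟩ * ⟨y, hyp⟩ := Subtype.ext rfl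
      rw [e0, map_mul]
      set u : BraidGroup n := ↑(nabla ⟨x, hxp⟩)
      set v : BraidGroup n := ↑(nabla ⟨y, hyp⟩)
      have hv : v ∈ PureBraid n := (nabla ⟨y, hyp⟩).2
      have eq1 : (↑(nabla ⟨x, hxp⟩ * nabla ⟨y, hyp⟩) : BraidGroup n)⁻¹ *
          ((piN n)⁻¹ * (x * y) * piN n) =
          (v⁻¹ * (u⁻¹ * ((piN n)⁻¹ * x * piN n)) * (v⁻¹)⁻¹) *
            (v⁻¹ * ((piN n)⁻¹ * y * piN n)) := by
        push_cast
        group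
        rfl
      rw [eq1]
      exact Subgroup.mul_mem _
        (conj_N_mem (Subgroup.inv_mem _ hv) (by simpa [mul_assoc] using px hxp))
        (by simpa [mul_assoc] using py hyp)
    | inv x hx px =>
      intro hp
      have hxp : x ∈ PureBraid n := Mfull_le_pure hx
      have e0 : (⟨x⁻¹, hp⟩ : ↥(PureBraid n)) = (⟨x, hxp⟩)⁻¹ := Subtype.ext rfl
      rw [e0, map_inv]
      set u : BraidGroup n := ↑(nabla ⟨x, hxp⟩)
      have hu : u ∈ PureBraid n := (nabla ⟨x, hxp⟩).2
      have eq1 : (↑(nabla ⟨x, hxp⟩)⁻¹ : BraidGroup n)⁻¹ *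
          ((piN n)⁻¹ * x⁻¹ * piN n) =
          u * (u⁻¹ * ((piN n)⁻¹ * x * piN n))⁻¹ * u⁻¹ := by
        push_cast
        group
        rfl
      rw [eq1]
      exact conj_N_mem hu (Subgroup.inv_mem _ (by simpa [mul_assoc] using px hxp))
  have := key ↑α hα α.2
  simpa using this

theorem nabla_iter_A (hnabla : IsNabla n nabla) :
    ∀ i j, 1 ≤ i → i < j → j ≤ n → (⇑nabla)^[i] (Agen n i j) = 1 := by
  intro i
  induction i with
  | zero => omega
  | succ i ih =>
    intro j _ hij hjn
    rcases Nat.eq_zero_or_pos i with rfl | hi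
    · rw [Function.iterate_one]
      exact hnabla.1 j (by omega) hjn
    · rw [Function.iterate_succ_apply]
      have e : nabla (Agen n (i+1) j) = Agen n i (j-1) := by
        have := hnabla.2 (i+1) j (by omega) hij hjn
        rwa [show i + 1 - 1 = i from rfl] at this
      rw [e]
      exact ih (j-1) hi (by omega) (by omega)

theorem nabla_iter_kill (hn : 2 ≤ n) (hnabla : IsNabla n nabla) (α : ↥(PureBraid n)) :
    (⇑nabla)^[n-1] α = 1 := by
  have hα : (α : BraidGroup n) ∈ Mfull n := pure_le_Mfull α.2
  have key : ∀ (x : BraidGroup n), x ∈ Mfull n → ∀ hp : x ∈ PureBraid n,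
      (⇑nabla)^[n-1] (⟨x, hp⟩ : ↥(PureBraid n)) = 1 := by
    intro x hx
    induction hx using Subgroup.closure_induction with
    | mem x hxgen =>
      obtain ⟨i, j, hi, hij, hjn, rfl⟩ := hxgen
      intro hp
      have e0 : (⟨A n i j, hp⟩ : ↥(PureBraid n)) = Agen n i j := Subtype.ext rfl
      rw [e0, show n - 1 = (n - 1 - i) + i by omega, Function.iterate_add_apply,
        nabla_iter_A nabla hnabla i j hi hij hjn, iterate_map_one]
    | one =>
      intro hp
      have e0 : (⟨(1 : BraidGroup n), hp⟩ : ↥(PureBraid n)) = 1 := Subtype.ext rfl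
      rw [e0, iterate_map_one]
    | mul x y hx hy px py =>
      intro hp
      have hxp : x ∈ PureBraid n := Mfull_le_pure hx
      have hyp : y ∈ PureBraid n := Mfull_le_pure hy
      have e0 : (⟨x * y, hp⟩ : ↥(PureBraid n)) = ⟨x, hxp⟩ * ⟨y, hyp⟩ := Subtype.ext rfl
      rw [e0, iterate_map_mul, px hxp, py hyp, mul_one]
    | inv x hx px =>
      intro hp
      have hxp : x ∈ PureBraid n := Mfull_le_pure hx
      have e0 : (⟨x⁻¹, hp⟩ : ↥(PureBraid n)) = (⟨x, hxp⟩)⁻¹ := Subtype.ext rfl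
      rw [e0, iterate_map_inv, px hxp, inv_one]
  have := key ↑α hα α.2
  simpa using this

theorem weave_succ (m : ℕ) (β : ↥(PureBraid n)) :
    weave n nabla (m+1) β = weave n nabla m β * (⇑nabla)^[m] β := by
  rw [weave, weave, List.range_succ, List.map_append, List.prod_append,
    List.map_singleton, List.prod_singleton]

theorem weave_shift (m : ℕ) (β : ↥(PureBraid n)) :
    β * nabla (weave n nabla m β) = weave n nabla (m+1) β := by
  rw [weave, weave, List.range_succ_eq_map, List.map_cons, List.prod_cons,
    Function.iterate_zero_apply, map_list_prod, List.map_map, List.map_map]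
  have hfun : (⇑nabla ∘ fun t => (⇑nabla)^[t] β) =
      ((fun t => (⇑nabla)^[t] β) ∘ Nat.succ) := by
    funext t
    simp [Function.comp, Function.iterate_succ_apply']
  rw [hfun]

theorem weave_telescope (m : ℕ) (κ : ↥(PureBraid n)) :
    weave n nabla m (κ * (nabla κ)⁻¹) = κ * ((⇑nabla)^[m] κ)⁻¹ := by
  induction m with
  | zero => simp [weave]
  | succ m ih =>
    rw [weave_succ, ih, iterate_map_mul, iterate_map_inv,
      ← Function.iterate_succ_apply nabla m κ]
    group

end Assembly
/-- For a woven braid `ω ∈ W_n^1` and a pure braid `κ ∈ P_n`,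
the conjugate `κ⁻¹ ω κ` lies in `W_n^1` if and only if `κ ∈ K_n`. -/
theorem conj_mem_W1_iff (n : ℕ) (hn : 2 ≤ n)
    (nabla : ↥(PureBraid n) →* ↥(PureBraid n)) (hnabla : IsNabla n nabla)
    (ω : BraidGroup n) (hω : ω ∈ W1 n) (κ : ↥(PureBraid n)) :
    (↑κ)⁻¹ * ω * ↑κ ∈ W1 n ↔ κ ∈ Kset n nabla := by
  obtain ⟨b, hb, rfl⟩ := hω
  have hKpure : (↑κ : BraidGroup n) ∈ PureBraid n := κ.2
  have hd0 := d_mem nabla hn hnabla κ⁻¹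
  have hd : (↑(nabla κ) : BraidGroup n) *
      ((piN n)⁻¹ * (↑κ : BraidGroup n)⁻¹ * piN n) ∈ P n n := by
    have e : ((nabla κ⁻¹ : ↥(PureBraid n)) : BraidGroup n)⁻¹ *
        ((piN n)⁻¹ * ((κ⁻¹ : ↥(PureBraid n)) : BraidGroup n) * piN n)
        = (↑(nabla κ) : BraidGroup n) *
          ((piN n)⁻¹ * (↑κ : BraidGroup n)⁻¹ * piN n) := by
      rw [map_inv]
      push_cast
      group
    rw [← e]
    exact hd0
  have step2 : (piN n)⁻¹ * (↑κ : BraidGroup n)⁻¹ * piN n * ↑κ ∈ P n n ↔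
      κ ∈ Kset n nabla := by
    constructor
    · intro hyN
      refine ⟨κ * (nabla κ)⁻¹, ?_, ?_⟩
      · have e : ((κ * (nabla κ)⁻¹ : ↥(PureBraid n)) : BraidGroup n)
            = ((↑κ : BraidGroup n) *
                ((piN n)⁻¹ * (↑κ : BraidGroup n)⁻¹ * piN n * ↑κ) *
                (↑κ : BraidGroup n)⁻¹) *
              ((↑(nabla κ) : BraidGroup n) *
                ((piN n)⁻¹ * (↑κ : BraidGroup n)⁻¹ * piN n))⁻¹ := by
          push_cast
          group
        rw [e]
        exact mul_mem (conj_N_mem hKpure hyN) (inv_mem hd)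
      · have ht := weave_telescope nabla (n-1) κ
        rw [nabla_iter_kill nabla hn hnabla κ, inv_one, mul_one] at ht
        exact ht.symm
    · rintro ⟨β, hβN, hκw⟩
      have hshift := weave_shift nabla (n-1) β
      have hsucc := weave_succ nabla (n-1) β
      rw [nabla_iter_kill nabla hn hnabla β, mul_one] at hsucc
      have hβκ : nabla κ = β⁻¹ * κ := by
        rw [hκw, eq_inv_mul_iff_mul_eq]
        exact hshift.trans hsucc
      have h1 : (↑(nabla κ) : BraidGroup n)⁻¹ * ↑κ ∈ P n n := by
        have e : (↑(nabla κ) : BraidGroup n)⁻¹ * ↑κ =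
            (↑κ : BraidGroup n)⁻¹ * ↑β * ↑κ := by
          rw [hβκ]
          push_cast
          group
        rw [e]
        simpa using conj_N_mem (inv_mem hKpure) hβN
      have h2 : (↑κ : BraidGroup n)⁻¹ *
          ((↑(nabla κ) : BraidGroup n) *
            ((piN n)⁻¹ * (↑κ : BraidGroup n)⁻¹ * piN n)) * ↑κ ∈ P n n := by
        simpa [mul_assoc] using conj_N_mem (inv_mem hKpure) hd
      have hyD : (piN n)⁻¹ * (↑κ : BraidGroup n)⁻¹ * piN n * ↑κ =
          ((↑(nabla κ) : BraidGroup n)⁻¹ * ↑κ) *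
            ((↑κ : BraidGroup n)⁻¹ *
              ((↑(nabla κ) : BraidGroup n) *
                ((piN n)⁻¹ * (↑κ : BraidGroup n)⁻¹ * piN n)) * ↑κ) := by
        group
      rw [hyD]
      exact mul_mem h1 h2
  constructor
  · rintro ⟨b', hb', he⟩
    apply step2.mp
    have hy' : (piN n)⁻¹ * (↑κ : BraidGroup n)⁻¹ * piN n * ↑κ =
        b' * ((↑κ : BraidGroup n)⁻¹ * b * ↑κ)⁻¹ := by
      have hb'e : b' = (piN n)⁻¹ * ((↑κ : BraidGroup n)⁻¹ * (piN n * b) * ↑κ) := by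
        rw [he]
        group
      rw [hb'e]
      group
    rw [hy']
    exact mul_mem hb' (inv_mem (by simpa using conj_N_mem (inv_mem hKpure) hb))
  · intro hκK
    have hyN := step2.mpr hκK
    refine ⟨((piN n)⁻¹ * (↑κ : BraidGroup n)⁻¹ * piN n * ↑κ) *
      ((↑κ : BraidGroup n)⁻¹ * b * ↑κ),
      mul_mem hyN (by simpa using conj_N_mem (inv_mem hKpure) hb), ?_⟩
    group
end

section
/- There exists a group isomorphism f : B_n → B_n^{op} (the multiplicative opposite group of B_n) with f(σ_i) = op(σ_{n−i}) for all 1 ≤ i ≤ n−1; write inv(β) for the element of B_n underlying f(β), so that inv is an anti-automorphism of B_n reversing words and replacing σ_i by σ_{n−i}. Then inv maps W_n^1 onto itself: if ω ∈ W_n^1 then inv(ω) ∈ W_n^1. -/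
namespace BraidInvAux

open MulOpposite

theorem mk_rel_one {n : ℕ} {r : FreeGroup ℕ} (hr : r ∈ braidRels n) :
    PresentedGroup.mk (braidRels n) r = 1 :=
  (QuotientGroup.eq_one_iff r).mpr (Subgroup.subset_normalClosure hr)

theorem σ_mk (n i : ℕ) : σ n i = PresentedGroup.mk (braidRels n) (FreeGroup.of i) := rfl

theorem σ_one {n i : ℕ} (hi : i = 0 ∨ n ≤ i) : σ n i = 1 :=
  mk_rel_one (Or.inr (Or.inr ⟨i, hi, rfl⟩))

theorem braid_rel {n i : ℕ} (h1 : 1 ≤ i) (h2 : i + 2 ≤ n) :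
    σ n i * σ n (i+1) * σ n i = σ n (i+1) * σ n i * σ n (i+1) := by
  have h := mk_rel_one (n := n) (Or.inl ⟨i, h1, h2, rfl⟩)
  simp only [map_mul, map_inv, ← σ_mk] at h
  exact mul_inv_eq_one.mp h

theorem comm_rel {n i j : ℕ} (h1 : 1 ≤ i) (h2 : i + 2 ≤ j) (h3 : j + 1 ≤ n) :
    σ n i * σ n j = σ n j * σ n i := by
  have h := mk_rel_one (n := n) (Or.inr (Or.inl ⟨i, j, h1, h2, h3, rfl⟩))
  simp only [map_mul, map_inv, ← σ_mk] at h
  exact mul_inv_eq_one.mp h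

/-- The generator images of the inverting anti-automorphism. -/
def invGen (n : ℕ) : ℕ → (BraidGroup n)ᵐᵒᵖ :=
  fun i => if 1 ≤ i ∧ i + 1 ≤ n then op (σ n (n - i)) else 1

theorem invGen_lift (n : ℕ) : ∀ r ∈ braidRels n, FreeGroup.lift (invGen n) r = 1 := by
  rintro r (⟨i, h1, h2, rfl⟩ | ⟨i, j, h1, h2, h3, rfl⟩ | ⟨i, hi, rfl⟩)
  · have e1 : invGen n i = op (σ n (n - i)) := if_pos ⟨h1, by omega⟩
    have e2 : invGen n (i+1) = op (σ n (n - (i+1))) := if_pos ⟨by omega, by omega⟩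
    have hni : n - i = (n - (i+1)) + 1 := by omega
    simp only [map_mul, map_inv, FreeGroup.lift_apply_of, e1, e2, hni]
    rw [mul_inv_eq_one]
    set j := n - (i+1) with hj
    simp only [← op_mul]
    exact congrArg op
      (by rw [← mul_assoc, ← mul_assoc, braid_rel (by omega) (by omega)])
  · have e1 : invGen n i = op (σ n (n - i)) := if_pos ⟨h1, by omega⟩
    have e2 : invGen n j = op (σ n (n - j)) := if_pos ⟨by omega, by omega⟩
    simp only [map_mul, map_inv, FreeGroup.lift_apply_of, e1, e2]
    rw [mul_inv_eq_one]
    simp only [← op_mul]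
    have hc := comm_rel (n := n) (i := n - j) (j := n - i) (by omega) (by omega) (by omega)
    exact congrArg op hc
  · have e : invGen n i = 1 := if_neg (by omega)
    simp [e]

/-- The inverting anti-automorphism, as a homomorphism to the opposite group. -/
def Fhom (n : ℕ) : BraidGroup n →* (BraidGroup n)ᵐᵒᵖ :=
  PresentedGroup.toGroup (invGen_lift n)

theorem Fhom_σ {n i : ℕ} (h1 : 1 ≤ i) (h2 : i + 1 ≤ n) :
    Fhom n (σ n i) = op (σ n (n - i)) := by
  show PresentedGroup.toGroup (invGen_lift n) (PresentedGroup.of i) = _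
  rw [PresentedGroup.toGroup.of]
  exact if_pos ⟨h1, h2⟩

theorem Fhom_σ_one {n i : ℕ} (h : ¬(1 ≤ i ∧ i + 1 ≤ n)) : Fhom n (σ n i) = 1 := by
  show PresentedGroup.toGroup (invGen_lift n) (PresentedGroup.of i) = _
  rw [PresentedGroup.toGroup.of]
  exact if_neg h

theorem Fhom_Fhom (n : ℕ) (a : BraidGroup n) : ((Fhom n) ((Fhom n a).unop)).unop = a := by
  have key : ((MulEquiv.opOp (BraidGroup n)).symm.toMonoidHom.comp
      ((MonoidHom.op (Fhom n)).comp (Fhom n))) = MonoidHom.id (BraidGroup n) := by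
    ext x
    show ((Fhom n) ((Fhom n (σ n x)).unop)).unop = σ n x
    by_cases hx : 1 ≤ x ∧ x + 1 ≤ n
    · rw [Fhom_σ hx.1 hx.2, unop_op, Fhom_σ (by omega) (by omega),
        show n - (n - x) = x by omega, unop_op]
    · rw [Fhom_σ_one hx]
      simp only [unop_one, map_one]
      exact (σ_one (by omega)).symm
  exact DFunLike.congr_fun key a

/-- The inverting anti-automorphism as a `MulEquiv` to the opposite group. -/
def Fequiv (n : ℕ) : BraidGroup n ≃* (BraidGroup n)ᵐᵒᵖ where
  toFun := Fhom n
  invFun := fun x => ((Fhom n) x.unop).unop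
  left_inv := fun a => Fhom_Fhom n a
  right_inv := fun x => unop_injective (Fhom_Fhom n x.unop)
  map_mul' := map_mul _

theorem unopF_mul (n : ℕ) (x y : BraidGroup n) :
    (Fhom n (x * y)).unop = (Fhom n y).unop * (Fhom n x).unop := by
  rw [map_mul]; rfl

theorem unopF_inv (n : ℕ) (x : BraidGroup n) :
    (Fhom n x⁻¹).unop = ((Fhom n x).unop)⁻¹ := by
  rw [map_inv]; rfl

/-- Descending product `σ_a σ_{a-1} ⋯ σ_b`. -/
def DD (n b : ℕ) : ℕ → BraidGroup n
  | 0 => 1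
  | a+1 => if a + 1 < b then 1 else σ n (a+1) * DD n b a

theorem DD_of_lt {n : ℕ} {b a : ℕ} (h : a < b) : DD n b a = 1 := by
  cases a with
  | zero => rfl
  | succ a => exact if_pos h

theorem DD_succ_not_lt {n b a : ℕ} (h : ¬ (a + 1 < b)) :
    DD n b (a+1) = σ n (a+1) * DD n b a := if_neg h

theorem DD_pop {n : ℕ} (b : ℕ) (hb : 1 ≤ b) :
    ∀ a, b ≤ a → DD n b a = DD n (b+1) a * σ n b := by
  intro a
  induction a with
  | zero => omega
  | succ a ih =>
    intro hba
    rcases Nat.lt_or_ge a b with hab | hab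
    · -- b = a+1
      have hb' : b = a + 1 := by omega
      subst hb'
      rw [DD_succ_not_lt (by omega), DD_of_lt (by omega),
        DD_of_lt (by omega)]
      simp
    · rw [DD_succ_not_lt (by omega), DD_succ_not_lt (by omega), ih hab, mul_assoc]

theorem DD_split {n : ℕ} (a : ℕ) :
    ∀ m, m ≤ a → DD n 1 a = DD n (m+1) a * DD n 1 m := by
  intro m
  induction m with
  | zero => intro _; simp [DD]
  | succ m ih =>
    intro hma
    rw [ih (by omega), DD_pop (m+1) (by omega) a hma, mul_assoc,
      DD_succ_not_lt (by omega)]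

/-- Ascending product `σ_1 σ_2 ⋯ σ_m`. -/
def LL (n : ℕ) : ℕ → BraidGroup n
  | 0 => 1
  | m+1 => LL n m * σ n (m+1)

/-- Product `A_{1,n} A_{2,n} ⋯ A_{m,n}`. -/
def AP (n : ℕ) : ℕ → BraidGroup n
  | 0 => 1
  | m+1 => AP n m * A n (m+1) n

theorem A_eq_conj {n : ℕ} {k j : ℕ} (h1 : 1 ≤ k) (h2 : k < j) :
    A n k j = DD n (k+1) (j-1) * σ n k ^ 2 * (DD n (k+1) (j-1))⁻¹ := by
  obtain ⟨t, rfl⟩ : ∃ t, j = k + 1 + t := ⟨j - k - 1, by omega⟩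
  rw [show k + 1 + t - 1 = k + t from by omega]
  clear h2
  induction t with
  | zero =>
    show A n k (k+1) = _
    rw [show A n k (k+1) = if k ≤ k then σ n k ^ 2 else _ from rfl, if_pos le_rfl,
      DD_of_lt (by omega)]
    simp
  | succ t ih =>
    show A n k ((k+1+t)+1) = _
    rw [show A n k ((k+1+t)+1) =
        if k+1+t ≤ k then σ n k ^ 2 else σ n (k+1+t) * A n k (k+1+t) * (σ n (k+1+t))⁻¹
        from rfl, if_neg (by omega), ih,
      show k + (t+1) = (k+t)+1 from by omega, DD_succ_not_lt (by omega)]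
    group

theorem A_mem_P {n i : ℕ} (h1 : 1 ≤ i) (h2 : i < n) : A n i n ∈ P n n :=
  Subgroup.subset_closure ⟨i, Set.mem_Ico.mpr ⟨h1, h2⟩, rfl⟩

theorem unopF_A {n i : ℕ} (h1 : 1 ≤ i) :
    ∀ t, i + 1 + t ≤ n →
      (Fhom n (A n i (i+1+t))).unop
        = (DD n (n-i-t) (n-i-1))⁻¹ * σ n (n-i) ^ 2 * DD n (n-i-t) (n-i-1) := by
  intro t
  induction t with
  | zero =>
    intro ht
    show (Fhom n (A n i (i+1))).unop = _
    rw [show A n i (i+1) = if i ≤ i then σ n i ^ 2 else _ from rfl, if_pos le_rfl,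
      DD_of_lt (show n-i-1 < n-i-0 from by omega)]
    rw [pow_two, unopF_mul, Fhom_σ h1 (by omega), unop_op, pow_two]
    group
  | succ t ih =>
    intro ht
    show (Fhom n (A n i ((i+1+t)+1))).unop = _
    rw [show A n i ((i+1+t)+1) =
        if i+1+t ≤ i then σ n i ^ 2 else σ n (i+1+t) * A n i (i+1+t) * (σ n (i+1+t))⁻¹
        from rfl, if_neg (by omega)]
    rw [unopF_mul, unopF_mul, unopF_inv, Fhom_σ (by omega) (by omega),
      ih (by omega), unop_op]
    have hD : DD n (n-i-(t+1)) (n-i-1)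
        = DD n ((n-i-(t+1))+1) (n-i-1) * σ n (n-i-(t+1)) :=
      DD_pop _ (by omega) _ (by omega)
    rw [show n - (i+1+t) = n-i-(t+1) from by omega, hD,
      show (n-i-(t+1))+1 = n-i-t from by omega]
    group

theorem conjF_A {n i : ℕ} (hn : 2 ≤ n) (h1 : 1 ≤ i) (h2 : i < n) :
    DD n 1 (n-1) * (Fhom n (A n i n)).unop * (DD n 1 (n-1))⁻¹ = A n (n-i) n := by
  have hA := unopF_A (n := n) h1 (n - i - 1) (by omega)
  rw [show i + 1 + (n-i-1) = n from by omega] at hA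
  rw [hA, show n - i - (n-i-1) = 1 from by omega]
  set k := n - i with hk
  have hsplit : DD n 1 (n-1) = DD n ((k-1)+1) (n-1) * DD n 1 (k-1) :=
    DD_split (n-1) (k-1) (by omega)
  rw [show (k-1)+1 = k from by omega] at hsplit
  have hpop : DD n k (n-1) = DD n (k+1) (n-1) * σ n k :=
    DD_pop k (by omega) (n-1) (by omega)
  rw [A_eq_conj (show 1 ≤ k from by omega) (show k < n from by omega), hsplit, hpop]
  group

theorem LL_eq_filter (n : ℕ) :
    ∀ m : ℕ, (((List.range m).filter (fun i => decide (0 < i))).map (σ n)).prod = LL n (m-1) := by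
  intro m
  induction m with
  | zero => rfl
  | succ m ih =>
    rw [List.range_succ, List.filter_append, List.map_append, List.prod_append]
    cases m with
    | zero => simpa using ih
    | succ m =>
      have : List.filter (fun i => decide (0 < i)) [m+1] = [m+1] := by simp
      rw [this, ih]
      simp [LL]

theorem piN_eq_LL (n : ℕ) : piN n = LL n (n-1) := by
  have hps : partialSums [n] = [n] := by simp [partialSums]
  show piBraid n [n] = _
  rw [piBraid, hps]
  rw [show List.filter (fun i => decide (1 ≤ i ∧ i ∉ [n])) (List.range n)
      = List.filter (fun i => decide (0 < i)) (List.range n) from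
    List.filter_congr (fun i hi => by
      simp only [List.mem_range] at hi
      simp only [decide_eq_decide, List.mem_singleton]
      omega)]
  exact LL_eq_filter n n

theorem unopF_LL {n : ℕ} (hn : 2 ≤ n) :
    ∀ m, m ≤ n - 1 → (Fhom n (LL n m)).unop = (LL n (n-1-m))⁻¹ * LL n (n-1) := by
  intro m
  induction m with
  | zero =>
    intro _
    show (Fhom n 1).unop = _
    rw [map_one]
    simp
  | succ m ih =>
    intro hm
    show (Fhom n (LL n m * σ n (m+1))).unop = _
    rw [unopF_mul, ih (by omega), Fhom_σ (by omega) (by omega), unop_op]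
    have : LL n (n-1-m) = LL n ((n-1-m-1)+1) := by rw [show n-1-m-1+1 = n-1-m from by omega]
    rw [this, show LL n ((n-1-m-1)+1) = LL n (n-1-m-1) * σ n (n-1-m-1+1) from rfl,
      show n-1-m-1+1 = n - (m+1) from by omega, show n-1-m-1 = n-1-(m+1) from by omega]
    group

theorem unopF_piN {n : ℕ} (hn : 2 ≤ n) : (Fhom n (piN n)).unop = piN n := by
  rw [piN_eq_LL, unopF_LL hn (n-1) le_rfl]
  simp [show n-1-(n-1) = 0 from by omega, LL]

theorem Theta_eq {n : ℕ} (hn : 2 ≤ n) :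
    ∀ m, m ≤ n - 1 → DD n 1 (n-1) * LL n m = AP n m * DD n (m+1) (n-1) := by
  intro m
  induction m with
  | zero => intro _; simp [LL, AP, DD]
  | succ m ih =>
    intro hm
    show DD n 1 (n-1) * (LL n m * σ n (m+1)) = AP n m * A n (m+1) n * DD n (m+2) (n-1)
    rw [← mul_assoc, ih (by omega)]
    have hA : A n (m+1) n = DD n (m+2) (n-1) * σ n (m+1) ^ 2 * (DD n (m+2) (n-1))⁻¹ := by
      have := A_eq_conj (n := n) (k := m+1) (j := n) (by omega) (by omega)
      rwa [show n - 1 = n-1 from rfl] at this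
    have hpop : DD n (m+1) (n-1) = DD n (m+2) (n-1) * σ n (m+1) :=
      DD_pop (m+1) (by omega) (n-1) (by omega)
    rw [hA, hpop, pow_two]
    group

theorem AP_mem_P {n : ℕ} : ∀ m, m ≤ n - 1 → AP n m ∈ P n n := by
  intro m
  induction m with
  | zero => intro _; exact Subgroup.one_mem _
  | succ m ih =>
    intro hm
    exact Subgroup.mul_mem _ (ih (by omega)) (A_mem_P (by omega) (by omega))

theorem Theta_mem_P {n : ℕ} (hn : 2 ≤ n) : DD n 1 (n-1) * piN n ∈ P n n := by
  rw [piN_eq_LL, Theta_eq hn (n-1) le_rfl, DD_of_lt (show n-1 < (n-1)+1 from by omega),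
    mul_one]
  exact AP_mem_P (n-1) le_rfl

theorem conj_inv_mem_P {n : ℕ} (hn : 2 ≤ n) {b : BraidGroup n} (hb : b ∈ P n n) :
    (piN n)⁻¹ * (Fhom n b).unop * piN n ∈ P n n := by
  refine Subgroup.closure_induction
    (p := fun x _ => (piN n)⁻¹ * (Fhom n x).unop * piN n ∈ P n n) ?_ ?_ ?_ ?_ hb
  · rintro x ⟨i, hi, rfl⟩
    show (piN n)⁻¹ * (Fhom n (A n i n)).unop * piN n ∈ P n n
    rw [Set.mem_Ico] at hi
    have key : (piN n)⁻¹ * (Fhom n (A n i n)).unop * piN n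
        = (DD n 1 (n-1) * piN n)⁻¹ * A n (n-i) n * (DD n 1 (n-1) * piN n) := by
      rw [← conjF_A hn hi.1 hi.2]
      group
    rw [key]
    have hT := Theta_mem_P (n := n) hn
    exact Subgroup.mul_mem _
      (Subgroup.mul_mem _ (Subgroup.inv_mem _ hT) (A_mem_P (by omega) (by omega)))
      hT
  · show (piN n)⁻¹ * (Fhom n 1).unop * piN n ∈ P n n
    rw [map_one]
    simpa using Subgroup.one_mem (P n n)
  · intro x y _ _ hx hy
    show (piN n)⁻¹ * (Fhom n (x * y)).unop * piN n ∈ P n n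
    have : (piN n)⁻¹ * (Fhom n (x * y)).unop * piN n
        = ((piN n)⁻¹ * (Fhom n y).unop * piN n) * ((piN n)⁻¹ * (Fhom n x).unop * piN n) := by
      rw [unopF_mul]; group
    rw [this]
    exact Subgroup.mul_mem _ hy hx
  · intro x _ hx
    show (piN n)⁻¹ * (Fhom n x⁻¹).unop * piN n ∈ P n n
    have : (piN n)⁻¹ * (Fhom n x⁻¹).unop * piN n
        = ((piN n)⁻¹ * (Fhom n x).unop * piN n)⁻¹ := by
      rw [unopF_inv]; group
    rw [this]
    exact Subgroup.inv_mem _ hx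

end BraidInvAux

/-- There is a group isomorphism `f : B_n → B_nᵒᵖ` with
`f(σ_i) = op(σ_{n-i})` for `1 ≤ i ≤ n-1` (so `inv := unop ∘ f` is the
anti-automorphism of `B_n` reversing words and sending `σ_i ↦ σ_{n-i}`), and
`inv` maps `W_n^1` into itself. -/
theorem inv_maps_W1_to_W1 (n : ℕ) (hn : 2 ≤ n) :
    ∃ f : BraidGroup n ≃* (BraidGroup n)ᵐᵒᵖ,
      (∀ i, 1 ≤ i → i ≤ n - 1 → f (σ n i) = MulOpposite.op (σ n (n - i))) ∧
      ∀ ω ∈ W1 n, (f ω).unop ∈ W1 n := by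
  classical
  refine ⟨BraidInvAux.Fequiv n, ?_, ?_⟩
  · intro i h1 h2
    exact BraidInvAux.Fhom_σ h1 (by omega)
  · rintro ω ⟨b, hb, rfl⟩
    refine ⟨(piN n)⁻¹ * (BraidInvAux.Fhom n b).unop * piN n,
      BraidInvAux.conj_inv_mem_P hn hb, ?_⟩
    show (BraidInvAux.Fhom n (piN n * b)).unop = _
    rw [BraidInvAux.unopF_mul, BraidInvAux.unopF_piN hn]
    group
end

section
/- Let ι : B_n → B_{n+1} be the group homomorphism with ι(σ_i) = σ_i for all 1 ≤ i ≤ n−1. If ω ∈ W_n^1 is a woven braid of type (n), then both ι(ω) σ_n and ι(ω) σ_n^{−1} are woven braids of type (n+1), i.e. elements of W_{n+1}^1 ⊂ B_{n+1}. (A stabilization move of type II⁺ applied to a woven braid of type (n) yields a woven braid of type (n+1).) -/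
lemma partialSums_single (m : ℕ) : partialSums [m] = [m] := by
  simp [partialSums]

lemma filter_range_eq (m k : ℕ) (hmk : m ≤ k) :
    (List.range m).filter (fun i => decide (1 ≤ i ∧ i ∉ partialSums [k]))
      = (List.range m).filter (fun i => decide (1 ≤ i)) := by
  apply List.filter_congr
  intro x hx
  rw [List.mem_range] at hx
  rw [partialSums_single]
  simp only [decide_eq_decide, List.mem_singleton]
  omega

lemma piN_succ (n : ℕ) (hn : 1 ≤ n) :
    piN (n+1) = (((List.range n).filter (fun i => decide (1 ≤ i))).map
      (σ (n+1))).prod * σ (n+1) n := by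
  unfold piN piBraid
  rw [List.range_succ, List.filter_append, filter_range_eq n (n+1) (by omega)]
  have h1 : List.filter (fun i => decide (1 ≤ i ∧ i ∉ partialSums [n+1])) [n] = [n] := by
    rw [partialSums_single]
    simp only [List.filter_cons, List.filter_nil]
    rw [if_pos (by simp only [decide_eq_true_eq, List.mem_singleton]; omega)]
  rw [h1, List.map_append, List.prod_append]
  simp

lemma A_map (n : ℕ) (ι : BraidGroup n →* BraidGroup (n+1))
    (hι : ∀ i, 1 ≤ i → i ≤ n - 1 → ι (σ n i) = σ (n+1) i)
    (i : ℕ) (hi1 : 1 ≤ i) (hi2 : i ≤ n - 1) :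
    ∀ j, j ≤ n → ι (A n i j) = A (n+1) i j := by
  intro j
  induction j with
  | zero => intro _; simp [A]
  | succ j ih =>
    intro hj
    by_cases h : j ≤ i
    · rw [A, if_pos h, A, if_pos h, map_pow, hι i hi1 hi2]
    · rw [A, if_neg h, A, if_neg h]
      have hj1 : 1 ≤ j := by omega
      have hj2 : j ≤ n - 1 := by omega
      rw [map_mul, map_mul, map_inv, hι j hj1 hj2, ih (by omega)]

/-- Let `ι : B_n → B_{n+1}` be the homomorphism with
`ι(σ_i) = σ_i` for `1 ≤ i ≤ n-1`.  If `ω ∈ W_n^1`, then both `ι(ω) σ_n` and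
`ι(ω) σ_n⁻¹` lie in `W_{n+1}^1` (a type II⁺ stabilization of a woven braid of
type `(n)` is woven of type `(n+1)`). -/
theorem stabilization_of_woven (n : ℕ) (hn : 2 ≤ n)
    (ι : BraidGroup n →* BraidGroup (n+1))
    (hι : ∀ i, 1 ≤ i → i ≤ n - 1 → ι (σ n i) = σ (n+1) i)
    (ω : BraidGroup n) (hω : ω ∈ W1 n) :
    ι ω * σ (n+1) n ∈ W1 (n+1) ∧ ι ω * (σ (n+1) n)⁻¹ ∈ W1 (n+1) := by
  obtain ⟨b, hb, rfl⟩ := hω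
  set c := σ (n+1) n with hc
  -- ι(π_n) * c = π_{n+1}
  have hpi : ι (piN n) * c = piN (n+1) := by
    rw [piN_succ n (by omega)]
    congr 1
    unfold piN piBraid
    rw [filter_range_eq n n le_rfl, map_list_prod, List.map_map]
    apply congrArg
    apply List.map_congr_left
    intro x hx
    rw [List.mem_filter, List.mem_range] at hx
    obtain ⟨hx1, hx2⟩ := hx
    simp only [decide_eq_true_eq] at hx2
    exact hι x hx2 (by omega)
  -- A_{n,n+1} = c²
  have hAn : A (n+1) n (n+1) = c ^ 2 := by rw [A, if_pos le_rfl]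
  have hAnK : A (n+1) n (n+1) ∈ P (n+1) (n+1) :=
    Subgroup.subset_closure ⟨n, Set.mem_Ico.mpr ⟨by omega, by omega⟩, rfl⟩
  -- the key conjugation fact
  have key : c⁻¹ * ι b * c ∈ P (n+1) (n+1) := by
    have hb' : b ∈ Subgroup.closure ((fun i => A n i n) '' Set.Ico 1 n) := hb
    clear hb
    induction hb' using Subgroup.closure_induction with
    | mem x hx =>
      obtain ⟨i, hi, rfl⟩ := hx
      rw [Set.mem_Ico] at hi
      rw [A_map n ι hι i hi.1 (by omega) n le_rfl]
      have hAi : A (n+1) i (n+1) = c * A (n+1) i n * c⁻¹ := by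
        rw [A, if_neg (by omega)]
      have heq : c⁻¹ * A (n+1) i n * c
          = (A (n+1) n (n+1))⁻¹ * A (n+1) i (n+1) * A (n+1) n (n+1) := by
        rw [hAi, hAn]; group
      rw [heq]
      exact mul_mem (mul_mem (inv_mem hAnK)
        (Subgroup.subset_closure ⟨i, Set.mem_Ico.mpr ⟨hi.1, by omega⟩, rfl⟩)) hAnK
    | one => simpa using (P (n+1) (n+1)).one_mem
    | mul x y hx hy hx' hy' =>
      have : c⁻¹ * ι (x * y) * c = (c⁻¹ * ι x * c) * (c⁻¹ * ι y * c) := by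
        rw [map_mul]; group
      rw [this]; exact mul_mem hx' hy'
    | inv x hx hx' =>
      have : c⁻¹ * ι x⁻¹ * c = (c⁻¹ * ι x * c)⁻¹ := by
        rw [map_inv]; group
      rw [this]; exact inv_mem hx'
  constructor
  · refine ⟨c⁻¹ * ι b * c, key, ?_⟩
    rw [map_mul, ← hpi]; group
  · refine ⟨(c⁻¹ * ι b * c) * (A (n+1) n (n+1))⁻¹, mul_mem key (inv_mem hAnK), ?_⟩
    rw [map_mul, ← hpi, hAn]; group
end

section
/- The homomorphism ∇ : P_n → P_n satisfies: ∇(P_n^j) = P_n^{j−1} for every 3 ≤ j ≤ n, ∇ maps P_n^2 to the trivial subgroup, and ∇^{n−1}(β) = 1 for every β ∈ P_n^n. -/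
theorem P_le_pure (n j : ℕ) : P n j ≤ PureBraid n := by
  apply Subgroup.closure_le _ |>.2
  rintro x ⟨i, -, rfl⟩
  exact A_mem_pure n i j

theorem subgroupOf_P (n j : ℕ) :
    (P n j).subgroupOf (PureBraid n)
      = Subgroup.closure ((fun i => Agen n i j) '' Set.Ico 1 j) := by
  apply Subgroup.map_injective (PureBraid n).subtype_injective
  rw [Subgroup.subgroupOf_map_subtype, inf_eq_left.2 (P_le_pure n j),
    MonoidHom.map_closure, Set.image_image]
  rfl

theorem P_one_eq_bot (n : ℕ) : P n 1 = ⊥ := by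
  unfold P
  rw [Set.Ico_self, Set.image_empty, Subgroup.closure_empty]

theorem nabla_key (n : ℕ) (nabla : ↥(PureBraid n) →* ↥(PureBraid n))
    (hnabla : IsNabla n nabla) (j : ℕ) (h2 : 2 ≤ j) (hjn : j ≤ n) :
    Subgroup.map nabla ((P n j).subgroupOf (PureBraid n))
      = (P n (j-1)).subgroupOf (PureBraid n) := by
  rw [subgroupOf_P, subgroupOf_P, MonoidHom.map_closure]
  apply le_antisymm
  · apply Subgroup.closure_le _ |>.2
    rintro x ⟨y, ⟨i, hi, rfl⟩, rfl⟩
    simp only [Set.mem_Ico] at hi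
    rcases eq_or_lt_of_le hi.1 with h1 | h1
    · rw [← h1, hnabla.1 j (by omega) hjn]
      exact one_mem _
    · rw [hnabla.2 i j (by omega) hi.2 hjn]
      exact Subgroup.subset_closure ⟨i - 1, Set.mem_Ico.2 ⟨by omega, by omega⟩, rfl⟩
  · apply Subgroup.closure_le _ |>.2
    rintro x ⟨i, hi, rfl⟩
    simp only [Set.mem_Ico] at hi
    apply Subgroup.subset_closure
    refine ⟨Agen n (i+1) j, ⟨i+1, Set.mem_Ico.2 ⟨by omega, by omega⟩, rfl⟩, ?_⟩
    rw [hnabla.2 (i+1) j (by omega) (by omega) hjn]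
    simp

/-- `∇(P_n^j) = P_n^{j-1}` for `3 ≤ j ≤ n`, `∇(P_n^2)` is
trivial, and `∇^{n-1}(β) = 1` for every `β ∈ P_n^n`. -/
theorem nabla_image_props (n : ℕ) (hn : 2 ≤ n)
    (nabla : ↥(PureBraid n) →* ↥(PureBraid n)) (hnabla : IsNabla n nabla) :
    (∀ j, 3 ≤ j → j ≤ n →
      Subgroup.map nabla ((P n j).subgroupOf (PureBraid n))
        = (P n (j-1)).subgroupOf (PureBraid n)) ∧
    Subgroup.map nabla ((P n 2).subgroupOf (PureBraid n)) = ⊥ ∧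
    (∀ β : ↥(PureBraid n), (β : BraidGroup n) ∈ P n n →
      (⇑nabla)^[n-1] β = 1) := by
  refine ⟨fun j h3 hjn => nabla_key n nabla hnabla j (by omega) hjn, ?_, ?_⟩
  · rw [nabla_key n nabla hnabla 2 le_rfl hn]
    show (P n 1).subgroupOf (PureBraid n) = ⊥
    rw [P_one_eq_bot, Subgroup.bot_subgroupOf]
  · have key : ∀ j, j ≤ n → ∀ β : ↥(PureBraid n),
        (β : BraidGroup n) ∈ P n j → (⇑nabla)^[j-1] β = 1 := by
      intro j
      induction j with
      | zero =>
        intro _ β hβ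
        have : P n 0 = ⊥ := by
          unfold P
          simp [Subgroup.closure_empty]
        rw [this, Subgroup.mem_bot] at hβ
        simpa using Subtype.ext hβ
      | succ j ih =>
        intro hj β hβ
        rcases Nat.eq_zero_or_pos j with rfl | hj1
        · rw [P_one_eq_bot, Subgroup.mem_bot] at hβ
          simpa using Subtype.ext hβ
        · have hβ' : β ∈ (P n (j+1)).subgroupOf (PureBraid n) := hβ
          have : nabla β ∈ (P n j).subgroupOf (PureBraid n) := by
            have := nabla_key n nabla hnabla (j+1) (by omega) hj
            rw [show j + 1 - 1 = j from rfl] at this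
            rw [← this]
            exact Subgroup.mem_map_of_mem nabla hβ'
          have h := ih (by omega) (nabla β) this
          have hrw : j + 1 - 1 = (j - 1) + 1 := by omega
          rw [hrw, Function.iterate_succ_apply]
          exact h
    exact key n le_rfl
end
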